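/- arXiv:math/0311384 — 10 statements merged into one kernel-verified Lean document; each statement's English description precedes it below -/
import Mathlib

section
/- Let {W_i}_{i∈I} be a family of closed subspaces of H with weights {v_i}. The following are equivalent: (1) {W_i} is a frame of subspaces with respect to {v_i} for H; (2) the synthesis operator T_{W,v}({f_i}) = Σ_i v_i f_i is a bounded linear surjection from (Σ_i ⊕ W_i)_{ℓ²} onto H; (3) the analysis operator T*_{W,v}(f) = {v_i π_{W_i}(f)} is bounded below (an isomorphism onto its range). -/
open scoped InnerProductSpace ENNReal

set_option maxHeartbeats 800000

section Aux

variable {H : Type*} [NormedAddCommGroup H] [InnerProductSpace ℝ H] [CompleteSpace H]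
  {I : Type*} {W : I → Submodule ℝ H} [∀ i, CompleteSpace (W i)] {v : I → ℝ}

lemma fusion_aux_T_single [DecidableEq I] (T : lp (fun i => ↥(W i)) 2 →L[ℝ] H)
    (hT : ∀ g : lp (fun i => ↥(W i)) 2, HasSum (fun i => v i • (g i : H)) (T g))
    (i : I) (w : W i) : T (lp.single 2 i w) = v i • (w : H) := by
  refine (hT _).unique ?_
  have h : (fun j => v j • (((lp.single 2 i w : lp (fun i => ↥(W i)) 2)) j : H)) =
      fun j => if j = i then v i • (w : H) else 0 := by
    funext j
    by_cases h : j = i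
    · subst h; rw [lp.single_apply_self]
      simp
    · rw [lp.single_apply_ne _ _ _ h]
      simp [h]
  rw [h]
  exact hasSum_ite_eq i _

lemma fusion_aux_adjoint_apply (T : lp (fun i => ↥(W i)) 2 →L[ℝ] H)
    (hT : ∀ g : lp (fun i => ↥(W i)) 2, HasSum (fun i => v i • (g i : H)) (T g))
    (f : H) (i : I) :
    (ContinuousLinearMap.adjoint T f) i = v i • Submodule.orthogonalProjectionOnto (W i) f := by
  classical
  refine ext_inner_left ℝ (fun w => ?_)
  rw [← lp.inner_single_left (𝕜 := ℝ) i w (ContinuousLinearMap.adjoint T f), ContinuousLinearMap.adjoint_inner_right, fusion_aux_T_single T hT i w,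
    real_inner_smul_left, inner_smul_right, Submodule.inner_orthogonalProjectionOnto_eq_of_mem_left]

lemma fusion_aux_sum (hv : ∀ i, 0 < v i) (T : lp (fun i => ↥(W i)) 2 →L[ℝ] H)
    (hT : ∀ g : lp (fun i => ↥(W i)) 2, HasSum (fun i => v i • (g i : H)) (T g))
    (f : H) :
    HasSum (fun i => v i ^ 2 * ‖(Submodule.orthogonalProjectionOnto (W i) f : H)‖ ^ 2)
      (‖ContinuousLinearMap.adjoint T f‖ ^ 2) := by
  have h2 : (0 : ℝ) < (2 : ℝ≥0∞).toReal := by norm_num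
  have hs := lp.hasSum_norm h2 (ContinuousLinearMap.adjoint T f)
  have ht : (2 : ℝ≥0∞).toReal = (2 : ℝ) := by norm_num
  have hcomp : (fun i => ‖(ContinuousLinearMap.adjoint T f) i‖ ^ (2 : ℝ≥0∞).toReal)
      = fun i => v i ^ 2 * ‖(Submodule.orthogonalProjectionOnto (W i) f : H)‖ ^ 2 := by
    funext i
    rw [fusion_aux_adjoint_apply T hT f i, ht]
    have hn : ‖(v i • Submodule.orthogonalProjectionOnto (W i) f : W i)‖
        = v i * ‖(Submodule.orthogonalProjectionOnto (W i) f : H)‖ := by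
      rw [norm_smul, Real.norm_eq_abs, abs_of_pos (hv i)]
      congr 1
    rw [show ((2 : ℝ)) = ((2 : ℕ) : ℝ) by norm_num, Real.rpow_natCast, hn, mul_pow]
  rw [hcomp] at hs
  have hnn : ‖ContinuousLinearMap.adjoint T f‖ ^ (2 : ℝ≥0∞).toReal
      = ‖ContinuousLinearMap.adjoint T f‖ ^ 2 := by
    rw [ht, show ((2 : ℝ)) = ((2 : ℕ) : ℝ) by norm_num, Real.rpow_natCast]
  rwa [hnn] at hs

end Aux

/-- For a family of closed subspaces with weights, the following are
equivalent: being a frame of subspaces; surjectivity of the (bounded) synthesis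
operator; and boundedness below of the analysis operator. -/
theorem fusionFrame_iff_synthesis_surjective_iff_analysis_boundedBelow
    {H : Type*} [NormedAddCommGroup H] [InnerProductSpace ℝ H] [CompleteSpace H]
    {I : Type*} (W : I → Submodule ℝ H) [∀ i, CompleteSpace (W i)]
    (v : I → ℝ) (hv : ∀ i, 0 < v i)
    (T : lp (fun i => ↥(W i)) 2 →L[ℝ] H)
    (hT : ∀ g : lp (fun i => ↥(W i)) 2, HasSum (fun i => v i • (g i : H)) (T g)) :
    ((∃ C D : ℝ, 0 < C ∧
        ∀ f : H, Summable (fun i => v i ^ 2 * ‖(Submodule.orthogonalProjectionOnto (W i) f : H)‖ ^ 2) ∧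
          C * ‖f‖ ^ 2 ≤ ∑' i, v i ^ 2 * ‖(Submodule.orthogonalProjectionOnto (W i) f : H)‖ ^ 2 ∧
          ∑' i, v i ^ 2 * ‖(Submodule.orthogonalProjectionOnto (W i) f : H)‖ ^ 2 ≤ D * ‖f‖ ^ 2) ↔
      Function.Surjective T) ∧
    (Function.Surjective T ↔
      ∃ c : ℝ, 0 < c ∧ ∀ f : H, c * ‖f‖ ≤ ‖ContinuousLinearMap.adjoint T f‖) := by
  set A := ContinuousLinearMap.adjoint T with hA
  have hsum : ∀ f : H, HasSum (fun i => v i ^ 2 * ‖(Submodule.orthogonalProjectionOnto (W i) f : H)‖ ^ 2)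
      (‖A f‖ ^ 2) := fun f => fusion_aux_sum hv T hT f
  -- Surjective T → bounded below
  have surj_to_bb : Function.Surjective T →
      ∃ c : ℝ, 0 < c ∧ ∀ f : H, c * ‖f‖ ≤ ‖A f‖ := by
    intro hs
    obtain ⟨C, Cpos, hC⟩ := T.exists_preimage_norm_le hs
    refine ⟨C⁻¹, inv_pos.mpr Cpos, fun f => ?_⟩
    obtain ⟨g, hg, hgn⟩ := hC f
    have key : ‖f‖ ^ 2 ≤ C * ‖f‖ * ‖A f‖ := by
      calc ‖f‖ ^ 2 = ⟪f, f⟫_ℝ := (real_inner_self_eq_norm_sq f).symm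
        _ = ⟪T g, f⟫_ℝ := by rw [hg]
        _ = ⟪g, A f⟫_ℝ := by rw [hA, ContinuousLinearMap.adjoint_inner_right]
        _ ≤ ‖g‖ * ‖A f‖ := real_inner_le_norm g (A f)
        _ ≤ C * ‖f‖ * ‖A f‖ := by
            apply mul_le_mul_of_nonneg_right hgn (norm_nonneg _)
    rcases eq_or_lt_of_le (norm_nonneg f) with h0 | h0
    · simp [← h0]
    · rw [inv_mul_le_iff₀ Cpos, ← mul_le_mul_iff_of_pos_left h0]
      calc ‖f‖ * ‖f‖ = ‖f‖ ^ 2 := (sq ‖f‖).symm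
        _ ≤ C * ‖f‖ * ‖A f‖ := key
        _ = ‖f‖ * (C * ‖A f‖) := by ring
  -- bounded below → Surjective T
  have bb_to_surj : (∃ c : ℝ, 0 < c ∧ ∀ f : H, c * ‖f‖ ≤ ‖A f‖) →
      Function.Surjective T := by
    rintro ⟨c, hc, hbb⟩
    set S : H →L[ℝ] H := T.comp A with hS
    have hSinner : ∀ f : H, ⟪S f, f⟫_ℝ = ‖A f‖ ^ 2 := by
      intro f
      rw [hS]
      simp only [ContinuousLinearMap.coe_comp', Function.comp_apply]
      rw [hA, real_inner_comm,
        ← ContinuousLinearMap.adjoint_inner_left T (ContinuousLinearMap.adjoint T f) f]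
      exact real_inner_self_eq_norm_sq _
    have hSbb : ∀ f : H, c ^ 2 * ‖f‖ ≤ ‖S f‖ := by
      intro f
      rcases eq_or_lt_of_le (norm_nonneg f) with h0 | h0
      · simp [← h0]
      · rw [← mul_le_mul_iff_of_pos_right h0]
        calc c ^ 2 * ‖f‖ * ‖f‖ = (c * ‖f‖) ^ 2 := by ring
          _ ≤ ‖A f‖ ^ 2 := by
              have := hbb f
              have h1 : 0 ≤ c * ‖f‖ := by positivity
              nlinarith
          _ = ⟪S f, f⟫_ℝ := (hSinner f).symm
          _ ≤ ‖S f‖ * ‖f‖ := real_inner_le_norm _ _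
    have hanti : AntilipschitzWith ⟨(c ^ 2)⁻¹, by positivity⟩ S := by
      apply ContinuousLinearMap.antilipschitz_of_bound
      intro x
      have := hSbb x
      show ‖x‖ ≤ (c ^ 2)⁻¹ * ‖S x‖
      rw [inv_mul_eq_div, le_div_iff₀ (by positivity)]
      linarith [hSbb x]
    have hclosed : IsClosed (Set.range S) := hanti.isClosed_range S.uniformContinuous
    have hclosed' : IsClosed ((LinearMap.range (S : H →ₗ[ℝ] H) : Submodule ℝ H) : Set H) := by
      simpa only [LinearMap.coe_range, ContinuousLinearMap.coe_coe] using hclosed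
    have hrange : LinearMap.range (S : H →ₗ[ℝ] H) = ⊤ := by
      haveI : CompleteSpace (LinearMap.range (S : H →ₗ[ℝ] H)) := hclosed'.completeSpace_coe
      rw [← (LinearMap.range (S : H →ₗ[ℝ] H)).orthogonal_orthogonal, Submodule.eq_top_iff']
      intro f w hw
      obtain rfl : w = 0 := by
        have h0 : ⟪S w, w⟫_ℝ = 0 := hw (S w) ⟨w, rfl⟩
        have h1 : ‖A w‖ ^ 2 = 0 := by rw [← hSinner w, h0]
        have h2 : ‖A w‖ = 0 := (pow_eq_zero_iff two_ne_zero).mp h1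
        have h3 := hbb w
        rw [h2] at h3
        have h4 : ‖w‖ = 0 :=
          le_antisymm (by nlinarith [norm_nonneg w]) (norm_nonneg w)
        exact norm_eq_zero.mp h4
      exact inner_zero_left _
    intro y
    have : y ∈ LinearMap.range (S : H →ₗ[ℝ] H) := hrange ▸ Submodule.mem_top
    obtain ⟨x, hx⟩ := this
    exact ⟨A x, hx⟩
  have hB : Function.Surjective T ↔
      ∃ c : ℝ, 0 < c ∧ ∀ f : H, c * ‖f‖ ≤ ‖A f‖ := ⟨surj_to_bb, bb_to_surj⟩
  -- frame condition ↔ bounded below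
  have hAiff : (∃ C D : ℝ, 0 < C ∧
      ∀ f : H, Summable (fun i => v i ^ 2 * ‖(Submodule.orthogonalProjectionOnto (W i) f : H)‖ ^ 2) ∧
        C * ‖f‖ ^ 2 ≤ ∑' i, v i ^ 2 * ‖(Submodule.orthogonalProjectionOnto (W i) f : H)‖ ^ 2 ∧
        ∑' i, v i ^ 2 * ‖(Submodule.orthogonalProjectionOnto (W i) f : H)‖ ^ 2 ≤ D * ‖f‖ ^ 2) ↔
      ∃ c : ℝ, 0 < c ∧ ∀ f : H, c * ‖f‖ ≤ ‖A f‖ := by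
    constructor
    · rintro ⟨C, D, hC, h⟩
      refine ⟨Real.sqrt C, Real.sqrt_pos.mpr hC, fun f => ?_⟩
      obtain ⟨-, hlow, -⟩ := h f
      rw [(hsum f).tsum_eq] at hlow
      have h1 : Real.sqrt (C * ‖f‖ ^ 2) ≤ Real.sqrt (‖A f‖ ^ 2) := Real.sqrt_le_sqrt hlow
      rwa [Real.sqrt_mul hC.le, Real.sqrt_sq (norm_nonneg f),
        Real.sqrt_sq (norm_nonneg _)] at h1
    · rintro ⟨c, hc, hb⟩
      refine ⟨c ^ 2, ‖A‖ ^ 2, by positivity, fun f => ?_⟩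
      refine ⟨(hsum f).summable, ?_, ?_⟩
      · rw [(hsum f).tsum_eq]
        calc c ^ 2 * ‖f‖ ^ 2 = (c * ‖f‖) ^ 2 := by ring
          _ ≤ ‖A f‖ ^ 2 := by
              have h1 : 0 ≤ c * ‖f‖ := by positivity
              nlinarith [hb f]
      · rw [(hsum f).tsum_eq]
        calc ‖A f‖ ^ 2 ≤ (‖A‖ * ‖f‖) ^ 2 := by
              have := A.le_opNorm f
              nlinarith [norm_nonneg (A f), norm_nonneg A, norm_nonneg f]
          _ = ‖A‖ ^ 2 * ‖f‖ ^ 2 := by ring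
  exact ⟨hAiff.trans hB.symm, hB⟩
end

section
/- Let {W_i}_{i∈I} be a frame of subspaces with respect to {v_i} for H with bounds C and D. The frame operator S_{W,v}(f) = Σ_i v_i² π_{W_i}(f) is a positive, self-adjoint, invertible bounded operator on H satisfying C·I ≤ S_{W,v} ≤ D·I, and every f ∈ H satisfies the reconstruction formula f = Σ_i v_i² S_{W,v}^{-1} π_{W_i}(f). -/
open scoped InnerProductSpace

/-- The frame operator `S f = Σ v_i² π_{W_i} f` of a frame of subspaces
with bounds `C, D` is positive, self-adjoint, invertible, satisfies `C·I ≤ S ≤ D·I`,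
and yields the reconstruction formula `f = Σ v_i² S⁻¹ π_{W_i} f`. -/
theorem fusionFrame_frameOperator_properties
    {H : Type*} [NormedAddCommGroup H] [InnerProductSpace ℝ H] [CompleteSpace H]
    {I : Type*} (W : I → Submodule ℝ H) [∀ i, CompleteSpace (W i)]
    (v : I → ℝ) (hv : ∀ i, 0 < v i) (C D : ℝ) (hC : 0 < C) (hCD : C ≤ D)
    (hframe : ∀ f : H,
      Summable (fun i => v i ^ 2 * ‖((W i).orthogonalProjectionOnto f : H)‖ ^ 2) ∧
      C * ‖f‖ ^ 2 ≤ ∑' i, v i ^ 2 * ‖((W i).orthogonalProjectionOnto f : H)‖ ^ 2 ∧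
      ∑' i, v i ^ 2 * ‖((W i).orthogonalProjectionOnto f : H)‖ ^ 2 ≤ D * ‖f‖ ^ 2)
    (S : H →L[ℝ] H)
    (hS : ∀ f : H, HasSum (fun i => v i ^ 2 • ((W i).orthogonalProjectionOnto f : H)) (S f)) :
    (∀ f : H, 0 ≤ (inner ℝ (S f) f : ℝ)) ∧
    IsSelfAdjoint S ∧
    (∀ f : H, C * ‖f‖ ^ 2 ≤ (inner ℝ (S f) f : ℝ) ∧ (inner ℝ (S f) f : ℝ) ≤ D * ‖f‖ ^ 2) ∧
    ∃ S' : H →L[ℝ] H, S'.comp S = ContinuousLinearMap.id ℝ H ∧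
      S.comp S' = ContinuousLinearMap.id ℝ H ∧
      ∀ f : H, HasSum (fun i => v i ^ 2 • S' ((W i).orthogonalProjectionOnto f : H)) f := by
  -- inner products against S f expand as sums
  have hinner : ∀ f g : H,
      HasSum (fun i => v i ^ 2 * (inner ℝ (((W i).orthogonalProjectionOnto f : H)) g : ℝ))
        (inner ℝ (S f) g : ℝ) := by
    intro f g
    have := ((innerSL ℝ (E := H)).flip g).hasSum (hS f)
    simpa only [ContinuousLinearMap.flip_apply, innerSL_apply_apply, real_inner_smul_left]
      using this
  -- inner of projection with f equals norm squared
  have hproj : ∀ (i : I) (f : H),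
      (inner ℝ (((W i).orthogonalProjectionOnto f : H)) f : ℝ)
        = ‖((W i).orthogonalProjectionOnto f : H)‖ ^ 2 := by
    intro i f
    have h0 := Submodule.starProjection_inner_eq_zero (K := W i) f
      ((W i).orthogonalProjectionOnto f : H) (Submodule.coe_mem _)
    have : (inner ℝ (f - ((W i).orthogonalProjectionOnto f : H))
        (((W i).orthogonalProjectionOnto f : H)) : ℝ) = 0 := h0
    rw [inner_sub_left] at this
    have h1 : (inner ℝ f (((W i).orthogonalProjectionOnto f : H)) : ℝ)
        = (inner ℝ (((W i).orthogonalProjectionOnto f : H))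
            (((W i).orthogonalProjectionOnto f : H)) : ℝ) := by linarith
    rw [real_inner_comm, h1, real_inner_self_eq_norm_sq]
  have hSff : ∀ f : H, (inner ℝ (S f) f : ℝ)
      = ∑' i, v i ^ 2 * ‖((W i).orthogonalProjectionOnto f : H)‖ ^ 2 := by
    intro f
    have := (hinner f f).tsum_eq
    simp_rw [hproj] at this
    exact this.symm
  have hbounds : ∀ f : H, C * ‖f‖ ^ 2 ≤ (inner ℝ (S f) f : ℝ) ∧
      (inner ℝ (S f) f : ℝ) ≤ D * ‖f‖ ^ 2 := by
    intro f
    rw [hSff f]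
    exact ⟨(hframe f).2.1, (hframe f).2.2⟩
  have hpos : ∀ f : H, 0 ≤ (inner ℝ (S f) f : ℝ) := by
    intro f
    have := (hbounds f).1
    nlinarith [norm_nonneg f, sq_nonneg ‖f‖]
  -- symmetry
  have hsym : ∀ f g : H, (inner ℝ (S f) g : ℝ) = (inner ℝ f (S g) : ℝ) := by
    intro f g
    have h1 := (hinner f g).tsum_eq
    have h2 := (hinner g f).tsum_eq
    have hswap : ∀ i, v i ^ 2 * (inner ℝ (((W i).orthogonalProjectionOnto f : H)) g : ℝ)
        = v i ^ 2 * (inner ℝ (((W i).orthogonalProjectionOnto g : H)) f : ℝ) := by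
      intro i
      rw [Submodule.coe_orthogonalProjectionOnto_apply, Submodule.coe_orthogonalProjectionOnto_apply,
        Submodule.inner_starProjection_left_eq_right, real_inner_comm]
    rw [← h1, real_inner_comm (S g) f, ← h2]
    exact tsum_congr hswap
  have hsa : IsSelfAdjoint S :=
    ContinuousLinearMap.isSelfAdjoint_iff_isSymmetric.mpr (fun f g => hsym f g)
  -- invertibility via Lax–Milgram
  have hcoer : IsCoercive ((innerSL ℝ (E := H)).comp S) := by
    refine ⟨C, hC, fun u => ?_⟩
    have := (hbounds u).1
    calc C * ‖u‖ * ‖u‖ = C * ‖u‖ ^ 2 := by ring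
      _ ≤ (inner ℝ (S u) u : ℝ) := this
      _ = ((innerSL ℝ (E := H)).comp S) u u := rfl
  set E := hcoer.continuousLinearEquivOfBilin with hE
  have hEeq : ∀ f : H, S f = E f := by
    intro f
    exact hcoer.unique_continuousLinearEquivOfBilin (fun w => rfl)
  refine ⟨hpos, hsa, hbounds, E.symm.toContinuousLinearMap, ?_, ?_, ?_⟩
  · ext f
    simp [hEeq f]
  · ext f
    have := hEeq (E.symm f)
    simpa using this
  · intro f
    have h := E.symm.toContinuousLinearMap.hasSum (hS f)
    have hfix : E.symm.toContinuousLinearMap (S f) = f := by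
      simp [hEeq f]
    simpa [map_smul, hfix] using h
end

section
/- Let {W_i}_{i∈I} be a frame of subspaces with respect to {v_i} for H, and let T : H → H be a bounded invertible operator. Then {T W_i}_{i∈I} is also a frame of subspaces with respect to {v_i} for H; if {W_i} has bounds C, D, then {T W_i} has bounds C/(‖T‖²‖T^{-1}‖²) and D‖T‖²‖T^{-1}‖². -/
open scoped InnerProductSpace

open ContinuousLinearMap in
/-- Key estimate: `‖π_{TV} f‖ ≤ ‖T⁻¹‖ * ‖π_V (T* f)‖`. -/
lemma proj_map_le {H : Type*} [NormedAddCommGroup H] [InnerProductSpace ℝ H]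
    [CompleteSpace H] (V : Submodule ℝ H) [CompleteSpace V]
    (T : H ≃L[ℝ] H) [CompleteSpace (V.map ((T : H →L[ℝ] H) : H →ₗ[ℝ] H))] (f : H) :
    ‖(Submodule.orthogonalProjectionOnto (V.map ((T : H →L[ℝ] H) : H →ₗ[ℝ] H)) f : H)‖ ≤
      ‖(T.symm : H →L[ℝ] H)‖ *
        ‖(Submodule.orthogonalProjectionOnto V (adjoint (T : H →L[ℝ] H) f) : H)‖ := by
  set g : H := adjoint (T : H →L[ℝ] H) f with hg
  set u : H := adjoint (T.symm : H →L[ℝ] H) (Submodule.orthogonalProjectionOnto V g : H) with hu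
  have hperp : f - u ∈ (V.map ((T : H →L[ℝ] H) : H →ₗ[ℝ] H))ᗮ := by
    intro y hy
    obtain ⟨x, hx, rfl⟩ := hy
    have h1 : ⟪(T : H →L[ℝ] H) x, u⟫_ℝ = ⟪x, g⟫_ℝ := by
      rw [hu, adjoint_inner_right]
      have : (T.symm : H →L[ℝ] H) ((T : H →L[ℝ] H) x) = x := T.symm_apply_apply x
      rw [this]
      have := Submodule.inner_starProjection_left_eq_right V x g
      simp only [Submodule.starProjection_apply] at this
      rw [← this, ← Submodule.starProjection_apply, Submodule.starProjection_eq_self_iff.2 hx]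
    have h2 : ⟪(T : H →L[ℝ] H) x, f⟫_ℝ = ⟪x, g⟫_ℝ := by
      rw [hg, adjoint_inner_right, real_inner_comm]
    rw [ContinuousLinearMap.coe_coe, inner_sub_right, h1, h2, sub_self]
  have hproj : Submodule.orthogonalProjectionOnto (V.map ((T : H →L[ℝ] H) : H →ₗ[ℝ] H)) f
      = Submodule.orthogonalProjectionOnto (V.map ((T : H →L[ℝ] H) : H →ₗ[ℝ] H)) u := by
    have : Submodule.orthogonalProjectionOnto (V.map ((T : H →L[ℝ] H) : H →ₗ[ℝ] H)) (f - u) = 0 :=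
      Submodule.orthogonalProjectionOnto_apply_of_mem_orthogonal hperp
    have h := map_sub (Submodule.orthogonalProjectionOnto (V.map ((T : H →L[ℝ] H) : H →ₗ[ℝ] H))) f u
    rw [this] at h
    exact sub_eq_zero.mp h.symm
  calc ‖(Submodule.orthogonalProjectionOnto (V.map ((T : H →L[ℝ] H) : H →ₗ[ℝ] H)) f : H)‖
      = ‖(Submodule.orthogonalProjectionOnto (V.map ((T : H →L[ℝ] H) : H →ₗ[ℝ] H)) u : H)‖ := by rw [hproj]
    _ ≤ ‖u‖ := by
        rw [← Submodule.coe_norm]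
        calc ‖Submodule.orthogonalProjectionOnto (V.map ((T : H →L[ℝ] H) : H →ₗ[ℝ] H)) u‖
            ≤ ‖Submodule.orthogonalProjectionOnto (V.map ((T : H →L[ℝ] H) : H →ₗ[ℝ] H))‖ * ‖u‖ := le_opNorm _ _
          _ ≤ 1 * ‖u‖ := by
              gcongr; exact Submodule.orthogonalProjectionOnto_norm_le _
          _ = ‖u‖ := one_mul _
    _ ≤ ‖adjoint (T.symm : H →L[ℝ] H)‖ * ‖(Submodule.orthogonalProjectionOnto V g : H)‖ :=
        le_opNorm _ _
    _ = ‖(T.symm : H →L[ℝ] H)‖ * ‖(Submodule.orthogonalProjectionOnto V g : H)‖ := by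
        rw [LinearIsometryEquiv.norm_map ContinuousLinearMap.adjoint]

lemma proj_congr {H : Type*} [NormedAddCommGroup H] [InnerProductSpace ℝ H]
    (V V' : Submodule ℝ H) [CompleteSpace V] [CompleteSpace V'] (h : V = V') (x : H) :
    (Submodule.orthogonalProjectionOnto V x : H) = (Submodule.orthogonalProjectionOnto V' x : H) := by
  subst h; rfl

/-- The image of a frame of subspaces under a bounded invertible
operator `T` is again a frame of subspaces, with bounds `C/(‖T‖²‖T⁻¹‖²)` and
`D‖T‖²‖T⁻¹‖²`. -/
theorem fusionFrame_map_invertible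
    {H : Type*} [NormedAddCommGroup H] [InnerProductSpace ℝ H] [CompleteSpace H]
    {I : Type*} (W : I → Submodule ℝ H) [∀ i, CompleteSpace (W i)]
    (v : I → ℝ) (hv : ∀ i, 0 < v i) (C D : ℝ) (hC : 0 < C) (hCD : C ≤ D)
    (hframe : ∀ f : H,
      Summable (fun i => v i ^ 2 * ‖(Submodule.orthogonalProjectionOnto (W i) f : H)‖ ^ 2) ∧
      C * ‖f‖ ^ 2 ≤ ∑' i, v i ^ 2 * ‖(Submodule.orthogonalProjectionOnto (W i) f : H)‖ ^ 2 ∧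
      ∑' i, v i ^ 2 * ‖(Submodule.orthogonalProjectionOnto (W i) f : H)‖ ^ 2 ≤ D * ‖f‖ ^ 2)
    (T : H ≃L[ℝ] H)
    [∀ i, CompleteSpace ↥((W i).map ((T : H →L[ℝ] H) : H →ₗ[ℝ] H))] :
    ∀ f : H,
      Summable (fun i =>
        v i ^ 2 * ‖(Submodule.orthogonalProjectionOnto ((W i).map ((T : H →L[ℝ] H) : H →ₗ[ℝ] H)) f : H)‖ ^ 2) ∧
      (C / (‖(T : H →L[ℝ] H)‖ ^ 2 * ‖(T.symm : H →L[ℝ] H)‖ ^ 2)) * ‖f‖ ^ 2 ≤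
        ∑' i, v i ^ 2 * ‖(Submodule.orthogonalProjectionOnto ((W i).map ((T : H →L[ℝ] H) : H →ₗ[ℝ] H)) f : H)‖ ^ 2 ∧
      ∑' i, v i ^ 2 * ‖(Submodule.orthogonalProjectionOnto ((W i).map ((T : H →L[ℝ] H) : H →ₗ[ℝ] H)) f : H)‖ ^ 2 ≤
        (D * (‖(T : H →L[ℝ] H)‖ ^ 2 * ‖(T.symm : H →L[ℝ] H)‖ ^ 2)) * ‖f‖ ^ 2 := by
  classical
  intro f
  set Tc : H →L[ℝ] H := (T : H →L[ℝ] H) with hTc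
  set Ts : H →L[ℝ] H := (T.symm : H →L[ℝ] H) with hTs
  set g : H := ContinuousLinearMap.adjoint Tc f with hg
  obtain ⟨hsum, hlow, hupp⟩ := hframe g
  have hD : (0:ℝ) < D := lt_of_lt_of_le hC hCD
  -- composition identities
  have hcomp : Tc.comp Ts = ContinuousLinearMap.id ℝ H := by
    ext x
    simp [hTc, hTs]
  have hadj : ContinuousLinearMap.adjoint Ts g = f := by
    have h1 : ContinuousLinearMap.adjoint Ts g
        = ContinuousLinearMap.adjoint (Tc.comp Ts) f := by
      rw [ContinuousLinearMap.adjoint_comp]; rfl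
    rw [h1, hcomp, ContinuousLinearMap.adjoint_id]; rfl
  have hNTadj : ‖ContinuousLinearMap.adjoint Tc‖ = ‖Tc‖ :=
    LinearIsometryEquiv.norm_map ContinuousLinearMap.adjoint Tc
  have hNSadj : ‖ContinuousLinearMap.adjoint Ts‖ = ‖Ts‖ :=
    LinearIsometryEquiv.norm_map ContinuousLinearMap.adjoint Ts
  have hgle : ‖g‖ ≤ ‖Tc‖ * ‖f‖ := by
    calc ‖g‖ ≤ ‖ContinuousLinearMap.adjoint Tc‖ * ‖f‖ :=
          ContinuousLinearMap.le_opNorm _ _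
      _ = ‖Tc‖ * ‖f‖ := by rw [hNTadj]
  have hfle : ‖f‖ ≤ ‖Ts‖ * ‖g‖ := by
    calc ‖f‖ = ‖ContinuousLinearMap.adjoint Ts g‖ := by rw [hadj]
      _ ≤ ‖ContinuousLinearMap.adjoint Ts‖ * ‖g‖ :=
          ContinuousLinearMap.le_opNorm _ _
      _ = ‖Ts‖ * ‖g‖ := by rw [hNSadj]
  -- term-wise upper estimate
  have key1 : ∀ i, v i ^ 2 * ‖(Submodule.orthogonalProjectionOnto ((W i).map (Tc : H →ₗ[ℝ] H)) f : H)‖ ^ 2 ≤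
      ‖Ts‖ ^ 2 * (v i ^ 2 * ‖(Submodule.orthogonalProjectionOnto (W i) g : H)‖ ^ 2) := by
    intro i
    have h := proj_map_le (W i) T f
    have h2 : ‖(Submodule.orthogonalProjectionOnto ((W i).map (Tc : H →ₗ[ℝ] H)) f : H)‖ ^ 2 ≤
        (‖Ts‖ * ‖(Submodule.orthogonalProjectionOnto (W i) g : H)‖) ^ 2 :=
      pow_le_pow_left₀ (norm_nonneg _) h 2
    calc v i ^ 2 * ‖(Submodule.orthogonalProjectionOnto ((W i).map (Tc : H →ₗ[ℝ] H)) f : H)‖ ^ 2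
        ≤ v i ^ 2 * (‖Ts‖ * ‖(Submodule.orthogonalProjectionOnto (W i) g : H)‖) ^ 2 :=
          mul_le_mul_of_nonneg_left h2 (sq_nonneg _)
      _ = ‖Ts‖ ^ 2 * (v i ^ 2 * ‖(Submodule.orthogonalProjectionOnto (W i) g : H)‖ ^ 2) := by ring
  have hsum2 : Summable (fun i =>
      ‖Ts‖ ^ 2 * (v i ^ 2 * ‖(Submodule.orthogonalProjectionOnto (W i) g : H)‖ ^ 2)) :=
    hsum.mul_left _
  have hS : Summable (fun i =>
      v i ^ 2 * ‖(Submodule.orthogonalProjectionOnto ((W i).map (Tc : H →ₗ[ℝ] H)) f : H)‖ ^ 2) := by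
    apply Summable.of_nonneg_of_le _ key1 hsum2
    intro i
    positivity
  refine ⟨hS, ?_, ?_⟩
  · -- lower bound
    rcases subsingleton_or_nontrivial H with hH | hH
    · have hf0 : f = 0 := Subsingleton.elim f 0
      have : (C / (‖Tc‖ ^ 2 * ‖Ts‖ ^ 2)) * ‖f‖ ^ 2 = 0 := by
        rw [hf0, norm_zero]; ring
      rw [this]
      exact tsum_nonneg fun i => by positivity
    · -- invertible maps on a nontrivial space have positive norms
      have hTcne : Tc ≠ 0 := by
        obtain ⟨x, hx⟩ := exists_ne (0 : H)
        intro h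
        apply hx
        have hx0 : Tc x = 0 := by rw [h]; rfl
        have : T x = 0 := hx0
        simpa using congrArg T.symm this
      have hTsne : Ts ≠ 0 := by
        obtain ⟨x, hx⟩ := exists_ne (0 : H)
        intro h
        apply hx
        have hx0 : Ts x = 0 := by rw [h]; rfl
        have : T.symm x = 0 := hx0
        simpa using congrArg T this
      have hNT : 0 < ‖Tc‖ := by
        rcases (norm_nonneg Tc).lt_or_eq with h | h
        · exact h
        · exact absurd ((ContinuousLinearMap.opNorm_zero_iff Tc).mp h.symm) hTcne
      have hNS : 0 < ‖Ts‖ := by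
        rcases (norm_nonneg Ts).lt_or_eq with h | h
        · exact h
        · exact absurd ((ContinuousLinearMap.opNorm_zero_iff Ts).mp h.symm) hTsne
      -- the submodule identity (T⁻¹)(T W) = W
      have hmap : ∀ i, (((W i).map (Tc : H →ₗ[ℝ] H)).map (Ts : H →ₗ[ℝ] H)) = W i := by
        intro i
        ext x
        simp only [Submodule.mem_map]
        constructor
        · rintro ⟨y, ⟨z, hz, rfl⟩, rfl⟩
          have : Ts (Tc z) = z := T.symm_apply_apply z
          rwa [ContinuousLinearMap.coe_coe, ContinuousLinearMap.coe_coe, this]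
        · intro hx
          exact ⟨Tc x, ⟨x, hx, rfl⟩, T.symm_apply_apply x⟩
      have key2 : ∀ i, v i ^ 2 * ‖(Submodule.orthogonalProjectionOnto (W i) g : H)‖ ^ 2 ≤
          ‖Tc‖ ^ 2 * (v i ^ 2 * ‖(Submodule.orthogonalProjectionOnto ((W i).map (Tc : H →ₗ[ℝ] H)) f : H)‖ ^ 2) := by
        intro i
        have emap : ((W i).map (Tc : H →ₗ[ℝ] H)).map ((T.symm : H →L[ℝ] H) : H →ₗ[ℝ] H) = W i := hmap i
        haveI : CompleteSpace (((W i).map (Tc : H →ₗ[ℝ] H)).map ((T.symm : H →L[ℝ] H) : H →ₗ[ℝ] H)) := by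
          rw [emap]; infer_instance
        have hadj' : ContinuousLinearMap.adjoint ((T.symm : H →L[ℝ] H)) g = f := hadj
        have h : ‖(Submodule.orthogonalProjectionOnto (W i) g : H)‖ ≤
            ‖Tc‖ * ‖(Submodule.orthogonalProjectionOnto ((W i).map (Tc : H →ₗ[ℝ] H)) f : H)‖ := by
          have e1 : (Submodule.orthogonalProjectionOnto
              (((W i).map (Tc : H →ₗ[ℝ] H)).map ((T.symm : H →L[ℝ] H) : H →ₗ[ℝ] H)) g : H)
              = (Submodule.orthogonalProjectionOnto (W i) g : H) := proj_congr _ _ emap g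
          have h0 := proj_map_le ((W i).map (Tc : H →ₗ[ℝ] H)) T.symm g
          rw [e1, hadj'] at h0
          have e2 : ‖((T.symm.symm : H ≃L[ℝ] H) : H →L[ℝ] H)‖ = ‖Tc‖ := by
            rw [ContinuousLinearEquiv.symm_symm]
          rwa [e2] at h0
        have h2 : ‖(Submodule.orthogonalProjectionOnto (W i) g : H)‖ ^ 2 ≤
            (‖Tc‖ * ‖(Submodule.orthogonalProjectionOnto ((W i).map (Tc : H →ₗ[ℝ] H)) f : H)‖) ^ 2 :=
          pow_le_pow_left₀ (norm_nonneg _) h 2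
        calc v i ^ 2 * ‖(Submodule.orthogonalProjectionOnto (W i) g : H)‖ ^ 2
            ≤ v i ^ 2 * (‖Tc‖ * ‖(Submodule.orthogonalProjectionOnto ((W i).map (Tc : H →ₗ[ℝ] H)) f : H)‖) ^ 2 :=
              mul_le_mul_of_nonneg_left h2 (sq_nonneg _)
          _ = ‖Tc‖ ^ 2 * (v i ^ 2 * ‖(Submodule.orthogonalProjectionOnto ((W i).map (Tc : H →ₗ[ℝ] H)) f : H)‖ ^ 2) := by
              ring
      have htsum2 : (∑' i, v i ^ 2 * ‖(Submodule.orthogonalProjectionOnto (W i) g : H)‖ ^ 2)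
          ≤ ‖Tc‖ ^ 2 * ∑' i, v i ^ 2 *
              ‖(Submodule.orthogonalProjectionOnto ((W i).map (Tc : H →ₗ[ℝ] H)) f : H)‖ ^ 2 := by
        rw [← tsum_mul_left]
        exact Summable.tsum_le_tsum key2 hsum (hS.mul_left _)
      have hfg : C * ‖f‖ ^ 2 ≤ ‖Ts‖ ^ 2 * (C * ‖g‖ ^ 2) := by
        have h2 : ‖f‖ ^ 2 ≤ (‖Ts‖ * ‖g‖) ^ 2 := pow_le_pow_left₀ (norm_nonneg _) hfle 2
        calc C * ‖f‖ ^ 2 ≤ C * (‖Ts‖ * ‖g‖) ^ 2 := mul_le_mul_of_nonneg_left h2 hC.le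
          _ = ‖Ts‖ ^ 2 * (C * ‖g‖ ^ 2) := by ring
      have hchain : C * ‖f‖ ^ 2 ≤ (‖Tc‖ ^ 2 * ‖Ts‖ ^ 2) *
          ∑' i, v i ^ 2 * ‖(Submodule.orthogonalProjectionOnto ((W i).map (Tc : H →ₗ[ℝ] H)) f : H)‖ ^ 2 := by
        have h3 : ‖Ts‖ ^ 2 * (C * ‖g‖ ^ 2) ≤ ‖Ts‖ ^ 2 *
            ∑' i, v i ^ 2 * ‖(Submodule.orthogonalProjectionOnto (W i) g : H)‖ ^ 2 := by
          apply mul_le_mul_of_nonneg_left hlow (by positivity)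
        have h4 : ‖Ts‖ ^ 2 *
            (∑' i, v i ^ 2 * ‖(Submodule.orthogonalProjectionOnto (W i) g : H)‖ ^ 2) ≤
            ‖Ts‖ ^ 2 * (‖Tc‖ ^ 2 * ∑' i, v i ^ 2 *
              ‖(Submodule.orthogonalProjectionOnto ((W i).map (Tc : H →ₗ[ℝ] H)) f : H)‖ ^ 2) :=
          mul_le_mul_of_nonneg_left htsum2 (by positivity)
        have h5 : ‖Ts‖ ^ 2 * (‖Tc‖ ^ 2 * ∑' i, v i ^ 2 *
            ‖(Submodule.orthogonalProjectionOnto ((W i).map (Tc : H →ₗ[ℝ] H)) f : H)‖ ^ 2) =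
            (‖Tc‖ ^ 2 * ‖Ts‖ ^ 2) * ∑' i, v i ^ 2 *
              ‖(Submodule.orthogonalProjectionOnto ((W i).map (Tc : H →ₗ[ℝ] H)) f : H)‖ ^ 2 := by ring
        linarith [hfg, h3, h4]
      rw [div_mul_eq_mul_div, div_le_iff₀ (by positivity)]
      have h6 : (∑' i, v i ^ 2 * ‖(Submodule.orthogonalProjectionOnto ((W i).map (Tc : H →ₗ[ℝ] H)) f : H)‖ ^ 2) *
          (‖Tc‖ ^ 2 * ‖Ts‖ ^ 2) = (‖Tc‖ ^ 2 * ‖Ts‖ ^ 2) *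
          ∑' i, v i ^ 2 * ‖(Submodule.orthogonalProjectionOnto ((W i).map (Tc : H →ₗ[ℝ] H)) f : H)‖ ^ 2 := by ring
      linarith [hchain]
  · -- upper bound
    calc (∑' i, v i ^ 2 * ‖(Submodule.orthogonalProjectionOnto ((W i).map (Tc : H →ₗ[ℝ] H)) f : H)‖ ^ 2)
        ≤ ∑' i, ‖Ts‖ ^ 2 * (v i ^ 2 * ‖(Submodule.orthogonalProjectionOnto (W i) g : H)‖ ^ 2) :=
          Summable.tsum_le_tsum key1 hS hsum2
      _ = ‖Ts‖ ^ 2 * ∑' i, v i ^ 2 * ‖(Submodule.orthogonalProjectionOnto (W i) g : H)‖ ^ 2 :=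
          tsum_mul_left
      _ ≤ ‖Ts‖ ^ 2 * (D * ‖g‖ ^ 2) :=
          mul_le_mul_of_nonneg_left hupp (by positivity)
      _ ≤ (D * (‖Tc‖ ^ 2 * ‖Ts‖ ^ 2)) * ‖f‖ ^ 2 := by
          have h2 : ‖g‖ ^ 2 ≤ (‖Tc‖ * ‖f‖) ^ 2 := pow_le_pow_left₀ (norm_nonneg _) hgle 2
          calc ‖Ts‖ ^ 2 * (D * ‖g‖ ^ 2)
              ≤ ‖Ts‖ ^ 2 * (D * (‖Tc‖ * ‖f‖) ^ 2) :=
                mul_le_mul_of_nonneg_left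
                  (mul_le_mul_of_nonneg_left h2 hD.le) (sq_nonneg _)
            _ = (D * (‖Tc‖ ^ 2 * ‖Ts‖ ^ 2)) * ‖f‖ ^ 2 := by ring
end

section
/- A family of closed subspaces {W_i}_{i∈I} of H is an orthonormal basis of subspaces (i.e., H is the orthogonal direct sum ⊕_i W_i) if and only if it is a 1-uniform Parseval frame of subspaces, i.e., Σ_i ‖π_{W_i}(f)‖² = ‖f‖² for all f ∈ H. -/
open scoped InnerProductSpace

/-- A family of closed subspaces is an orthonormal basis of subspaces
(pairwise orthogonal with dense span) iff it is a 1-uniform Parseval frame of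
subspaces, i.e. `Σ_i ‖π_{W_i} f‖² = ‖f‖²` for all `f`. -/
theorem orthonormalBasisOfSubspaces_iff_oneUniform_parseval
    {H : Type*} [NormedAddCommGroup H] [InnerProductSpace ℝ H] [CompleteSpace H]
    {I : Type*} (W : I → Submodule ℝ H) [∀ i, CompleteSpace (W i)] :
    ((∀ i j, i ≠ j → ∀ x ∈ W i, ∀ y ∈ W j, (inner ℝ x y : ℝ) = 0) ∧
      (⨆ i, W i).topologicalClosure = ⊤) ↔
    (∀ f : H, HasSum (fun i => ‖(Submodule.orthogonalProjection (W i) f : H)‖ ^ 2) (‖f‖ ^ 2)) := by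
  constructor
  · rintro ⟨horth, hdense⟩ f
    classical
    have hV : OrthogonalFamily ℝ (fun i => W i) (fun i => (W i).subtypeₗᵢ) := by
      intro i j hij x y
      exact horth i j hij x x.2 y y.2
    have hSum : IsHilbertSum ℝ (fun i => W i) (fun i => (W i).subtypeₗᵢ) :=
      IsHilbertSum.mkInternal _ hV hdense.ge
    set L := hSum.linearIsometryEquiv with hL
    -- the coordinates of `L f` are the orthogonal projections
    have hrepr : ∀ j, ((L f j : W j) : H) = (Submodule.orthogonalProjection (W j) f : H) := by
      intro j
      have h1 : HasSum (fun i => ((L f i : W i) : H)) f := by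
        simpa [hL] using hSum.hasSum_linearIsometryEquiv_symm (L f)
      have h2 : HasSum (fun i => ((Submodule.orthogonalProjection (W j)) ((L f i : W i) : H) : H))
          ((Submodule.orthogonalProjection (W j) f : H)) := by
        exact ((W j).subtypeL.comp (Submodule.orthogonalProjection (W j))).hasSum h1
      have h3 : ∀ i, i ≠ j →
          ((Submodule.orthogonalProjection (W j)) ((L f i : W i) : H) : H) = 0 := by
        intro i hij
        have hmem : ((L f i : W i) : H) ∈ (W j)ᗮ := by
          intro u hu
          have := horth i j hij ((L f i : W i) : H) (L f i).2 u hu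
          rwa [real_inner_comm] at this
        rw [Submodule.orthogonalProjectionOnto_apply_of_mem_orthogonal hmem]
        simp
      have h4 : HasSum (fun i => ((Submodule.orthogonalProjection (W j)) ((L f i : W i) : H) : H))
          ((Submodule.orthogonalProjection (W j)) ((L f j : W j) : H) : H) :=
        hasSum_single j h3
      have h5 := h2.unique h4
      rw [h5]
      exact congrArg _ (Submodule.orthogonalProjectionOnto_mem_subspace_eq_self (L f j)).symm
    have hnorm : HasSum (fun i => ‖L f i‖ ^ (2 : ℝ)) (‖L f‖ ^ (2 : ℝ)) := by
      simpa using lp.hasSum_norm (p := 2) (by norm_num) (L f)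
    have hco : ∀ i, ‖(Submodule.orthogonalProjection (W i) f : H)‖ = ‖L f i‖ := by
      intro i
      rw [← hrepr i]
      rfl
    have : HasSum (fun i => ‖(Submodule.orthogonalProjection (W i) f : H)‖ ^ (2 : ℕ)) (‖f‖ ^ (2 : ℕ)) := by
      simp only [hco]
      rw [show ‖f‖ = ‖L f‖ from (L.norm_map f).symm]
      simpa using hnorm
    exact this
  · intro h
    classical
    constructor
    · intro i j hij x hx y hy
      -- show `orthogonalProjection (W j) x = 0`
      have hx' : (Submodule.orthogonalProjection (W i) x : H) = x :=
        Submodule.starProjection_eq_self_iff.2 hx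
      have hsum := h x
      have hzero : HasSum
          (fun k => ‖(Submodule.orthogonalProjection (W k) x : H)‖ ^ 2
            - if k = i then ‖x‖ ^ 2 else 0) 0 := by
        have h0 := hsum.sub (hasSum_ite_eq i (‖x‖ ^ 2))
        rw [sub_self] at h0
        exact h0
      have hle : ‖(Submodule.orthogonalProjection (W j) x : H)‖ ^ 2
          - (if j = i then ‖x‖ ^ 2 else 0) ≤ 0 := by
        refine le_hasSum hzero j ?_
        intro k hk
        by_cases hki : k = i
        · subst hki
          simp [hx']
        · simp only [hki, if_false, sub_zero]
          positivity
      rw [if_neg (fun hh => hij hh.symm)] at hle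
      have hPj : (Submodule.orthogonalProjection (W j) x : H) = 0 := by
        have : ‖(Submodule.orthogonalProjection (W j) x : H)‖ ^ 2 = 0 := by
          have h0 : (0 : ℝ) ≤ ‖(Submodule.orthogonalProjection (W j) x : H)‖ ^ 2 := by positivity
          linarith
        simpa using pow_eq_zero_iff (n := 2) (by norm_num) |>.1 this
      have hxorth : x ∈ (W j)ᗮ := by
        have := Submodule.orthogonalProjectionOnto_eq_zero_iff (K := W j) (v := x)
        apply this.1
        exact Subtype.ext hPj
      have := hxorth y hy
      rwa [real_inner_comm] at this
    · rw [Submodule.topologicalClosure_eq_top_iff]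
      rw [Submodule.eq_bot_iff]
      intro x hx
      have hx' : ∀ i, (Submodule.orthogonalProjection (W i) x : H) = 0 := by
        intro i
        have hxi : x ∈ (W i)ᗮ := by
          have hle : W i ≤ ⨆ i, W i := le_iSup W i
          exact (Submodule.orthogonal_le hle) hx
        rw [Submodule.orthogonalProjectionOnto_apply_of_mem_orthogonal hxi]
        simp
      have hsum := h x
      have : HasSum (fun _ : I => (0 : ℝ)) (‖x‖ ^ 2) := by
        simpa [hx'] using hsum
      have h0 : ‖x‖ ^ 2 = 0 := (hasSum_zero.unique this).symm
      have : ‖x‖ = 0 := by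
        simpa using pow_eq_zero_iff (n := 2) (by norm_num) |>.1 h0
      exact norm_eq_zero.1 this
end

section
/- Let {W_i}_{i∈I} be a frame of subspaces with respect to {v_i} for H with upper bound D, and suppose T_i : H → W_i are operators such that {v_i² T_i}_{i∈I} is a resolution of the identity (Σ_i v_i² T_i(f) = f for all f). Then for every subset J ⊆ I and all f ∈ H, (1/D)‖Σ_{j∈J} v_j² T_j(f)‖² ≤ Σ_{j∈J} v_j² ‖T_j(f)‖². -/
open scoped InnerProductSpace

/-- If `{v_i² T_i}` is a resolution of the identity with `T_i` mapping
into `W_i`, and `{W_i}` has upper fusion frame bound `D`, then for every subset `J ⊆ I`,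
`(1/D)‖Σ_{j∈J} v_j² T_j f‖² ≤ Σ_{j∈J} v_j² ‖T_j f‖²` (the right-hand side taken in
`[0,∞]`). -/
theorem resolution_of_identity_lower_bound
    {H : Type*} [NormedAddCommGroup H] [InnerProductSpace ℝ H] [CompleteSpace H]
    {I : Type*} (W : I → Submodule ℝ H) [∀ i, CompleteSpace (W i)]
    (v : I → ℝ) (hv : ∀ i, 0 < v i) (C D : ℝ) (hC : 0 < C) (hCD : C ≤ D)
    (hframe : ∀ f : H,
      Summable (fun i => v i ^ 2 * ‖((W i).orthogonalProjectionOnto f : H)‖ ^ 2) ∧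
      C * ‖f‖ ^ 2 ≤ ∑' i, v i ^ 2 * ‖((W i).orthogonalProjectionOnto f : H)‖ ^ 2 ∧
      ∑' i, v i ^ 2 * ‖((W i).orthogonalProjectionOnto f : H)‖ ^ 2 ≤ D * ‖f‖ ^ 2)
    (T : I → H →L[ℝ] H) (hTmem : ∀ i f, T i f ∈ W i)
    (hres : ∀ f : H, HasSum (fun i => v i ^ 2 • T i f) f) :
    ∀ (J : Set I) (f : H),
      ENNReal.ofReal ((1 / D) * ‖∑' j : J, v (j : I) ^ 2 • T (j : I) f‖ ^ 2) ≤
        ∑' j : J, ENNReal.ofReal (v (j : I) ^ 2 * ‖T (j : I) f‖ ^ 2) := by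
  intro J f
  have hD : 0 < D := lt_of_lt_of_le hC hCD
  set S : ENNReal := ∑' j : J, ENNReal.ofReal (v (j : I) ^ 2 * ‖T (j : I) f‖ ^ 2) with hS
  by_cases hStop : S = ⊤
  · rw [hStop]; exact le_top
  -- the real sum A
  have hanonneg : ∀ j : J, 0 ≤ v (j : I) ^ 2 * ‖T (j : I) f‖ ^ 2 := fun j =>
    mul_nonneg (sq_nonneg _) (sq_nonneg _)
  have hasum : Summable (fun j : J => v (j : I) ^ 2 * ‖T (j : I) f‖ ^ 2) := by
    have := ENNReal.summable_toReal hStop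
    simpa [ENNReal.toReal_ofReal (hanonneg _)] using this
  set A : ℝ := ∑' j : J, v (j : I) ^ 2 * ‖T (j : I) f‖ ^ 2 with hA
  have hAnonneg : 0 ≤ A := tsum_nonneg hanonneg
  have hAS : ENNReal.ofReal A ≤ S := by
    rw [hS, ← ENNReal.ofReal_tsum_of_nonneg hanonneg hasum]
  refine le_trans ?_ hAS
  apply ENNReal.ofReal_le_ofReal
  -- now the real statement : (1/D) * ‖g‖^2 ≤ A
  set g : H := ∑' j : J, v (j : I) ^ 2 • T (j : I) f with hgdef
  have hsummg : Summable (fun j : J => v (j : I) ^ 2 • T (j : I) f) :=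
    (hres f).summable.subtype J
  have hg : HasSum (fun j : J => v (j : I) ^ 2 • T (j : I) f) g := hsummg.hasSum
  -- inner with g
  have hinner : HasSum (fun j : J => v (j : I) ^ 2 * ⟪g, T (j : I) f⟫_ℝ) (‖g‖ ^ 2) := by
    have := hg.mapL (innerSL ℝ g)
    simpa [real_inner_self_eq_norm_sq, inner_smul_right] using this
  -- projection bound for g
  obtain ⟨hgsum, -, hgub⟩ := hframe g
  have hkey : ‖g‖ ^ 2 ≤ Real.sqrt (D * ‖g‖ ^ 2) * Real.sqrt A := by
    refine le_of_tendsto hinner ?_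
    filter_upwards with s
    have step1 : ∀ j ∈ s, v (j : I) ^ 2 * ⟪g, T (j : I) f⟫_ℝ ≤
        (v (j : I) * ‖((W (j : I)).orthogonalProjectionOnto g : H)‖) * (v (j : I) * ‖T (j : I) f‖) := by
      intro j _
      have hmem : T (j : I) f ∈ W (j : I) := hTmem _ _
      have hz : ⟪g - ((W (j : I)).orthogonalProjectionOnto g : H), T (j : I) f⟫_ℝ = 0 :=
        (W (j : I)).starProjection_inner_eq_zero g _ hmem
      rw [inner_sub_left, sub_eq_zero] at hz
      rw [hz]
      calc v (j : I) ^ 2 * ⟪((W (j : I)).orthogonalProjectionOnto g : H), T (j : I) f⟫_ℝ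
          ≤ v (j : I) ^ 2 * (‖((W (j : I)).orthogonalProjectionOnto g : H)‖ * ‖T (j : I) f‖) := by
            apply mul_le_mul_of_nonneg_left (real_inner_le_norm _ _) (sq_nonneg _)
        _ = (v (j : I) * ‖((W (j : I)).orthogonalProjectionOnto g : H)‖) * (v (j : I) * ‖T (j : I) f‖) := by
            ring
    refine le_trans (Finset.sum_le_sum step1) ?_
    have hcs := Finset.sum_mul_sq_le_sq_mul_sq s
      (fun j : J => v (j : I) * ‖((W (j : I)).orthogonalProjectionOnto g : H)‖)
      (fun j : J => v (j : I) * ‖T (j : I) f‖)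
    have h1 : ∑ j ∈ s, (v (j : I) * ‖((W (j : I)).orthogonalProjectionOnto g : H)‖) ^ 2
        ≤ D * ‖g‖ ^ 2 := by
      refine le_trans ?_ hgub
      have := Summable.sum_le_tsum (s.map (Function.Embedding.subtype _))
        (fun i _ => mul_nonneg (sq_nonneg (v i)) (sq_nonneg _)) hgsum
      rw [Finset.sum_map] at this
      simp only [Function.Embedding.coe_subtype, mul_pow] at this ⊢
      exact this
    have h2 : ∑ j ∈ s, (v (j : I) * ‖T (j : I) f‖) ^ 2 ≤ A := by
      refine le_trans (le_of_eq ?_) (Summable.sum_le_tsum s (fun j _ => hanonneg j) hasum)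
      exact Finset.sum_congr rfl fun j _ => by ring
    have hsnn : 0 ≤ ∑ j ∈ s, (v (j : I) * ‖((W (j : I)).orthogonalProjectionOnto g : H)‖) * (v (j : I) * ‖T (j : I) f‖) :=
      Finset.sum_nonneg fun j _ => mul_nonneg
        (mul_nonneg (hv _).le (norm_nonneg _)) (mul_nonneg (hv _).le (norm_nonneg _))
    have hDgnn : (0:ℝ) ≤ D * ‖g‖ ^ 2 := mul_nonneg hD.le (sq_nonneg _)
    have : (∑ j ∈ s, (v (j : I) * ‖((W (j : I)).orthogonalProjectionOnto g : H)‖) * (v (j : I) * ‖T (j : I) f‖)) ^ 2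
        ≤ (D * ‖g‖ ^ 2) * A := by
      refine le_trans hcs ?_
      exact mul_le_mul h1 h2 (Finset.sum_nonneg fun j _ => sq_nonneg _) hDgnn
    calc ∑ j ∈ s, (v (j : I) * ‖((W (j : I)).orthogonalProjectionOnto g : H)‖) * (v (j : I) * ‖T (j : I) f‖)
        = Real.sqrt ((∑ j ∈ s, (v (j : I) * ‖((W (j : I)).orthogonalProjectionOnto g : H)‖) * (v (j : I) * ‖T (j : I) f‖)) ^ 2) := by
          rw [Real.sqrt_sq hsnn]
      _ ≤ Real.sqrt ((D * ‖g‖ ^ 2) * A) := Real.sqrt_le_sqrt this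
      _ = Real.sqrt (D * ‖g‖ ^ 2) * Real.sqrt A := Real.sqrt_mul hDgnn _
  -- conclude: ‖g‖^2 ≤ D * A  (from ‖g‖² ≤ sqrt(D‖g‖²) sqrt A)
  have hfinal : ‖g‖ ^ 2 ≤ D * A := by
    have h4 : (‖g‖ ^ 2) ^ 2 ≤ (D * ‖g‖ ^ 2) * A := by
      calc (‖g‖ ^ 2) ^ 2 ≤ (Real.sqrt (D * ‖g‖ ^ 2) * Real.sqrt A) ^ 2 := by
            apply pow_le_pow_left₀ (sq_nonneg _) hkey
        _ = (D * ‖g‖ ^ 2) * A := by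
            rw [mul_pow, Real.sq_sqrt (mul_nonneg hD.le (sq_nonneg _)), Real.sq_sqrt hAnonneg]
    rcases eq_or_lt_of_le (sq_nonneg ‖g‖) with h0 | h0
    · nlinarith
    · nlinarith
  rw [div_mul_eq_mul_div, one_mul, div_le_iff₀ hD]
  linarith [hfinal]
end

section
/- Let {W_i}_{i∈I} be a frame of subspaces with respect to {v_i} for H with bounds C and D, with frame operator S_{W,v}. Define T_i = π_{W_i} S_{W,v}^{-1}. Then {v_i² T_i}_{i∈I} is an unconditional resolution of the identity, and (C/D²)‖f‖² ≤ Σ_i v_i² ‖T_i(f)‖² ≤ (D/C²)‖f‖² for all f ∈ H. -/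
open scoped InnerProductSpace

open scoped RealInnerProductSpace in
private lemma fusion_aux_proj_inner {H : Type*} [NormedAddCommGroup H]
    [InnerProductSpace ℝ H] (K : Submodule ℝ H) [CompleteSpace K] (x y : H) :
    ⟪(Submodule.orthogonalProjectionOnto K x : H), y⟫_ℝ
      = ⟪(Submodule.orthogonalProjectionOnto K x : H), (Submodule.orthogonalProjectionOnto K y : H)⟫_ℝ := by
  have h0 : ⟪y - (Submodule.orthogonalProjectionOnto K y : H), (Submodule.orthogonalProjectionOnto K x : H)⟫_ℝ = 0 :=
    Submodule.starProjection_inner_eq_zero (K := K) y _ (SetLike.coe_mem _)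
  have h1 : ⟪(Submodule.orthogonalProjectionOnto K x : H), y - (Submodule.orthogonalProjectionOnto K y : H)⟫_ℝ = 0 := by
    rw [real_inner_comm]; exact h0
  rw [inner_sub_right, sub_eq_zero] at h1
  exact h1

/-- For a frame of subspaces with bounds `C, D`, frame operator `S`
(with inverse `S'`), the operators `T_i = π_{W_i} S⁻¹` give an unconditional resolution
of the identity `{v_i² T_i}`, and `(C/D²)‖f‖² ≤ Σ_i v_i² ‖T_i f‖² ≤ (D/C²)‖f‖²`. -/
theorem fusionFrame_canonical_resolution_of_identity
    {H : Type*} [NormedAddCommGroup H] [InnerProductSpace ℝ H] [CompleteSpace H]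
    {I : Type*} (W : I → Submodule ℝ H) [∀ i, CompleteSpace (W i)]
    (v : I → ℝ) (hv : ∀ i, 0 < v i) (C D : ℝ) (hC : 0 < C) (hCD : C ≤ D)
    (hframe : ∀ f : H,
      Summable (fun i => v i ^ 2 * ‖(Submodule.orthogonalProjectionOnto (W i) f : H)‖ ^ 2) ∧
      C * ‖f‖ ^ 2 ≤ ∑' i, v i ^ 2 * ‖(Submodule.orthogonalProjectionOnto (W i) f : H)‖ ^ 2 ∧
      ∑' i, v i ^ 2 * ‖(Submodule.orthogonalProjectionOnto (W i) f : H)‖ ^ 2 ≤ D * ‖f‖ ^ 2)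
    (S S' : H →L[ℝ] H)
    (hS : ∀ f : H, HasSum (fun i => v i ^ 2 • (Submodule.orthogonalProjectionOnto (W i) f : H)) (S f))
    (hS'S : S'.comp S = ContinuousLinearMap.id ℝ H)
    (hSS' : S.comp S' = ContinuousLinearMap.id ℝ H) :
    (∀ f : H,
      HasSum (fun i => v i ^ 2 • (Submodule.orthogonalProjectionOnto (W i) (S' f) : H)) f) ∧
    (∀ f : H,
      Summable (fun i => v i ^ 2 * ‖(Submodule.orthogonalProjectionOnto (W i) (S' f) : H)‖ ^ 2) ∧
      (C / D ^ 2) * ‖f‖ ^ 2 ≤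
        ∑' i, v i ^ 2 * ‖(Submodule.orthogonalProjectionOnto (W i) (S' f) : H)‖ ^ 2 ∧
      ∑' i, v i ^ 2 * ‖(Submodule.orthogonalProjectionOnto (W i) (S' f) : H)‖ ^ 2 ≤
        (D / C ^ 2) * ‖f‖ ^ 2) := by
  have hD : 0 < D := lt_of_lt_of_le hC hCD
  have hSS'app : ∀ f : H, S (S' f) = f := by
    intro f
    have := ContinuousLinearMap.ext_iff.mp hSS' f
    simpa using this
  -- inner product expansion
  have hinner : ∀ f g : H,
      HasSum (fun i => v i ^ 2 *
        inner (𝕜 := ℝ) ((Submodule.orthogonalProjectionOnto (W i) f : H))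
          ((Submodule.orthogonalProjectionOnto (W i) g : H))) (inner (𝕜 := ℝ) (S f) g) := by
    intro f g
    have h1 := (innerSL ℝ g).hasSum (hS f)
    have h2 : ∀ i, innerSL ℝ g (v i ^ 2 • (Submodule.orthogonalProjectionOnto (W i) f : H))
        = v i ^ 2 * inner (𝕜 := ℝ) ((Submodule.orthogonalProjectionOnto (W i) f : H))
            ((Submodule.orthogonalProjectionOnto (W i) g : H)) := by
      intro i
      simp only [innerSL_apply_apply, inner_smul_right]
      rw [real_inner_comm, fusion_aux_proj_inner]
    have h3 : innerSL ℝ g (S f) = inner (𝕜 := ℝ) (S f) g := real_inner_comm _ _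
    rw [← h3]
    simpa only [h2] using h1
  have hSff : ∀ f : H, inner (𝕜 := ℝ) (S f) f
      = ∑' i, v i ^ 2 * ‖(Submodule.orthogonalProjectionOnto (W i) f : H)‖ ^ 2 := by
    intro f
    have := (hinner f f).tsum_eq
    simp only [real_inner_self_eq_norm_sq] at this
    exact this.symm
  -- lower bound for S
  have hlow : ∀ f : H, C * ‖f‖ ≤ ‖S f‖ := by
    intro f
    rcases eq_or_ne f 0 with rfl | hf
    · simp
    have hfp : 0 < ‖f‖ := norm_pos_iff.mpr hf
    have h1 : C * ‖f‖ ^ 2 ≤ inner (𝕜 := ℝ) (S f) f := by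
      rw [hSff f]; exact (hframe f).2.1
    have h2 : inner (𝕜 := ℝ) (S f) f ≤ ‖S f‖ * ‖f‖ := real_inner_le_norm _ _
    nlinarith
  -- upper bound for S
  have hup : ∀ f : H, ‖S f‖ ≤ D * ‖f‖ := by
    intro f
    rcases eq_or_ne f 0 with rfl | hf
    · simp
    rcases eq_or_ne (S f) 0 with h0 | h0
    · rw [h0, norm_zero]; positivity
    have ha : 0 < ‖f‖ := norm_pos_iff.mpr hf
    have hb : 0 < ‖S f‖ := norm_pos_iff.mpr h0
    set a := ‖f‖ with ha'
    set b := ‖S f‖ with hb'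
    set t := b / a with ht'
    have ht : 0 < t := div_pos hb ha
    have hsumA := (hframe f).1
    have hsumB := (hframe (S f)).1
    have hA := (hframe f).2.2
    have hB := (hframe (S f)).2.2
    -- termwise Cauchy-Schwarz / AM-GM
    have hterm : ∀ i, v i ^ 2 *
        inner (𝕜 := ℝ) ((Submodule.orthogonalProjectionOnto (W i) f : H))
          ((Submodule.orthogonalProjectionOnto (W i) (S f) : H))
        ≤ (t * (v i ^ 2 * ‖(Submodule.orthogonalProjectionOnto (W i) f : H)‖ ^ 2)
            + t⁻¹ * (v i ^ 2 * ‖(Submodule.orthogonalProjectionOnto (W i) (S f) : H)‖ ^ 2)) / 2 := by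
      intro i
      have hcs : inner (𝕜 := ℝ) ((Submodule.orthogonalProjectionOnto (W i) f : H))
          ((Submodule.orthogonalProjectionOnto (W i) (S f) : H))
          ≤ ‖(Submodule.orthogonalProjectionOnto (W i) f : H)‖ * ‖(Submodule.orthogonalProjectionOnto (W i) (S f) : H)‖ :=
        real_inner_le_norm _ _
      have hv2 : (0:ℝ) ≤ v i ^ 2 := sq_nonneg _
      have htinv : 0 < t⁻¹ := inv_pos.mpr ht
      have hx := norm_nonneg ((Submodule.orthogonalProjectionOnto (W i) f : H))
      have hy := norm_nonneg ((Submodule.orthogonalProjectionOnto (W i) (S f) : H))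
      have key : ‖(Submodule.orthogonalProjectionOnto (W i) f : H)‖ * ‖(Submodule.orthogonalProjectionOnto (W i) (S f) : H)‖
          ≤ (t * ‖(Submodule.orthogonalProjectionOnto (W i) f : H)‖ ^ 2
              + t⁻¹ * ‖(Submodule.orthogonalProjectionOnto (W i) (S f) : H)‖ ^ 2) / 2 := by
        rw [le_div_iff₀ (by norm_num : (0:ℝ) < 2)]
        nlinarith [sq_nonneg (t * ‖(Submodule.orthogonalProjectionOnto (W i) f : H)‖
          - ‖(Submodule.orthogonalProjectionOnto (W i) (S f) : H)‖), ht, htinv,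
          mul_inv_cancel₀ (ne_of_gt ht), mul_pos ht htinv]
      calc v i ^ 2 * inner (𝕜 := ℝ) ((Submodule.orthogonalProjectionOnto (W i) f : H))
            ((Submodule.orthogonalProjectionOnto (W i) (S f) : H))
          ≤ v i ^ 2 * (‖(Submodule.orthogonalProjectionOnto (W i) f : H)‖
              * ‖(Submodule.orthogonalProjectionOnto (W i) (S f) : H)‖) :=
            mul_le_mul_of_nonneg_left hcs hv2
        _ ≤ v i ^ 2 * ((t * ‖(Submodule.orthogonalProjectionOnto (W i) f : H)‖ ^ 2
              + t⁻¹ * ‖(Submodule.orthogonalProjectionOnto (W i) (S f) : H)‖ ^ 2) / 2) :=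
            mul_le_mul_of_nonneg_left key hv2
        _ = (t * (v i ^ 2 * ‖(Submodule.orthogonalProjectionOnto (W i) f : H)‖ ^ 2)
              + t⁻¹ * (v i ^ 2 * ‖(Submodule.orthogonalProjectionOnto (W i) (S f) : H)‖ ^ 2)) / 2 := by ring
    have hsumR : Summable (fun i =>
        (t * (v i ^ 2 * ‖(Submodule.orthogonalProjectionOnto (W i) f : H)‖ ^ 2)
          + t⁻¹ * (v i ^ 2 * ‖(Submodule.orthogonalProjectionOnto (W i) (S f) : H)‖ ^ 2)) / 2) :=
      ((hsumA.mul_left t).add (hsumB.mul_left t⁻¹)).div_const 2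
    have hb2 : b ^ 2 = ∑' i, v i ^ 2 *
        inner (𝕜 := ℝ) ((Submodule.orthogonalProjectionOnto (W i) f : H))
          ((Submodule.orthogonalProjectionOnto (W i) (S f) : H)) := by
      rw [hb', ← real_inner_self_eq_norm_sq]
      exact (hinner f (S f)).tsum_eq.symm
    have hle : b ^ 2 ≤ (t * (∑' i, v i ^ 2 * ‖(Submodule.orthogonalProjectionOnto (W i) f : H)‖ ^ 2)
        + t⁻¹ * (∑' i, v i ^ 2 * ‖(Submodule.orthogonalProjectionOnto (W i) (S f) : H)‖ ^ 2)) / 2 := by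
      rw [hb2]
      calc _ ≤ ∑' i, (t * (v i ^ 2 * ‖(Submodule.orthogonalProjectionOnto (W i) f : H)‖ ^ 2)
            + t⁻¹ * (v i ^ 2 * ‖(Submodule.orthogonalProjectionOnto (W i) (S f) : H)‖ ^ 2)) / 2 :=
          Summable.tsum_le_tsum hterm (hinner f (S f)).summable hsumR
        _ = _ := by
          rw [tsum_div_const, Summable.tsum_add (hsumA.mul_left t) (hsumB.mul_left t⁻¹),
            tsum_mul_left, tsum_mul_left]
    have hfinal : b ^ 2 ≤ D * a * b := by
      have h1 : t * (∑' i, v i ^ 2 * ‖(Submodule.orthogonalProjectionOnto (W i) f : H)‖ ^ 2)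
          ≤ t * (D * a ^ 2) := mul_le_mul_of_nonneg_left hA (le_of_lt ht)
      have h2 : t⁻¹ * (∑' i, v i ^ 2 * ‖(Submodule.orthogonalProjectionOnto (W i) (S f) : H)‖ ^ 2)
          ≤ t⁻¹ * (D * b ^ 2) := mul_le_mul_of_nonneg_left hB (le_of_lt (inv_pos.mpr ht))
      have heq : (t * (D * a ^ 2) + t⁻¹ * (D * b ^ 2)) / 2 = D * a * b := by
        rw [ht']
        field_simp
        ring
      linarith
    nlinarith
  constructor
  · intro f
    have := hS (S' f)
    rwa [hSS'app f] at this
  · intro f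
    set g := S' f with hg'
    have hg : S g = f := hSS'app f
    have h1 := hframe g
    have hfg1 : C * ‖g‖ ≤ ‖f‖ := by rw [← hg]; exact hlow g
    have hfg2 : ‖f‖ ≤ D * ‖g‖ := by rw [← hg]; exact hup g
    refine ⟨h1.1, ?_, ?_⟩
    · rw [div_mul_eq_mul_div, div_le_iff₀ (by positivity)]
      have h2 : ‖f‖ ^ 2 ≤ D ^ 2 * ‖g‖ ^ 2 := by
        nlinarith [norm_nonneg f, norm_nonneg g, hD]
      have e1 : C * ‖f‖ ^ 2 ≤ C * (D ^ 2 * ‖g‖ ^ 2) :=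
        mul_le_mul_of_nonneg_left h2 hC.le
      have e2 : D ^ 2 * (C * ‖g‖ ^ 2)
          ≤ D ^ 2 * ∑' i, v i ^ 2 * ‖(Submodule.orthogonalProjectionOnto (W i) g : H)‖ ^ 2 :=
        mul_le_mul_of_nonneg_left h1.2.1 (sq_nonneg D)
      nlinarith [e1, e2]
    · rw [div_mul_eq_mul_div, le_div_iff₀ (by positivity)]
      have h2 : C ^ 2 * ‖g‖ ^ 2 ≤ ‖f‖ ^ 2 := by
        nlinarith [mul_le_mul hfg1 hfg1 (by positivity) (norm_nonneg f)]
      have e1 : (∑' i, v i ^ 2 * ‖(Submodule.orthogonalProjectionOnto (W i) g : H)‖ ^ 2) * C ^ 2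
          ≤ (D * ‖g‖ ^ 2) * C ^ 2 :=
        mul_le_mul_of_nonneg_right h1.2.2 (sq_nonneg C)
      have e2 : D * (C ^ 2 * ‖g‖ ^ 2) ≤ D * ‖f‖ ^ 2 :=
        mul_le_mul_of_nonneg_left h2 hD.le
      nlinarith [e1, e2]
end

section
/- Let {W_i}_{i∈I} be a frame of subspaces with respect to {v_i} for H with upper bound D, and let T_i : H → W_i be bounded operators with T_i π_{W_i} = T_i such that {v_i² T_i} is a resolution of the identity. Then with E = sup_i ‖T_i‖² (assumed finite), (1/D)‖f‖² ≤ Σ_i v_i² ‖T_i(f)‖² ≤ D E ‖f‖² for all f ∈ H. -/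
open scoped InnerProductSpace

/-- If `{v_i² T_i}` is a resolution of the identity with `T_i` mapping
into `W_i` and `T_i π_{W_i} = T_i`, and `{W_i}` is a frame of subspaces with bounds
`C, D`, then with `E = sup_i ‖T_i‖²` finite,
`(1/D)‖f‖² ≤ Σ_i v_i² ‖T_i f‖² ≤ D E ‖f‖²`. -/
theorem resolution_of_identity_frame_bounds
    {H : Type*} [NormedAddCommGroup H] [InnerProductSpace ℝ H] [CompleteSpace H]
    {I : Type*} (W : I → Submodule ℝ H) [∀ i, CompleteSpace (W i)]
    (v : I → ℝ) (hv : ∀ i, 0 < v i) (C D : ℝ) (hC : 0 < C) (hCD : C ≤ D)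
    (hframe : ∀ f : H,
      Summable (fun i => v i ^ 2 * ‖(Submodule.orthogonalProjection (W i) f : H)‖ ^ 2) ∧
      C * ‖f‖ ^ 2 ≤ ∑' i, v i ^ 2 * ‖(Submodule.orthogonalProjection (W i) f : H)‖ ^ 2 ∧
      ∑' i, v i ^ 2 * ‖(Submodule.orthogonalProjection (W i) f : H)‖ ^ 2 ≤ D * ‖f‖ ^ 2)
    (T : I → H →L[ℝ] H) (hTmem : ∀ i f, T i f ∈ W i)
    (hTproj : ∀ i (f : H), T i ((Submodule.orthogonalProjection (W i) f : H)) = T i f)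
    (hres : ∀ f : H, HasSum (fun i => v i ^ 2 • T i f) f)
    (E : ℝ) (hE : ∀ i, ‖T i‖ ^ 2 ≤ E) :
    ∀ f : H,
      Summable (fun i => v i ^ 2 * ‖T i f‖ ^ 2) ∧
      (1 / D) * ‖f‖ ^ 2 ≤ ∑' i, v i ^ 2 * ‖T i f‖ ^ 2 ∧
      ∑' i, v i ^ 2 * ‖T i f‖ ^ 2 ≤ (D * E) * ‖f‖ ^ 2 := by
  have hD : 0 < D := hC.trans_le hCD
  intro f
  rcases isEmpty_or_nonempty I with hI | hI
  · have hf : f = 0 := (hres f).unique hasSum_empty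
    subst hf
    simp [tsum_empty]
  obtain ⟨hsum_pi, hlow, hup⟩ := hframe f
  -- pointwise bound for the upper estimate
  have hpt : ∀ i, v i ^ 2 * ‖T i f‖ ^ 2 ≤ E * (v i ^ 2 * ‖(Submodule.orthogonalProjection (W i) f : H)‖ ^ 2) := by
    intro i
    have h1 : ‖T i f‖ ≤ ‖T i‖ * ‖(Submodule.orthogonalProjection (W i) f : H)‖ := by
      rw [← hTproj i f]; exact (T i).le_opNorm _
    have h2 : ‖T i f‖ ^ 2 ≤ E * ‖(Submodule.orthogonalProjection (W i) f : H)‖ ^ 2 := by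
      nlinarith [norm_nonneg (T i f), norm_nonneg ((Submodule.orthogonalProjection (W i) f : H)),
        norm_nonneg (T i), hE i, sq_nonneg ‖(Submodule.orthogonalProjection (W i) f : H)‖]
    nlinarith [sq_nonneg (v i)]
  have hS : Summable (fun i => v i ^ 2 * ‖T i f‖ ^ 2) := by
    refine Summable.of_nonneg_of_le (fun i => by positivity) hpt (hsum_pi.mul_left E)
  refine ⟨hS, ?_, ?_⟩
  · -- lower bound
    have h1 : HasSum (fun i => v i ^ 2 * ⟪T i f, f⟫_ℝ) (‖f‖ ^ 2) := by
      have := ((innerSL ℝ f).hasSum (hres f))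
      simp only [ContinuousLinearMap.map_smul] at this
      convert this using 2 with i
      · rfl
      · simp [innerSL_apply_apply, real_inner_comm, smul_eq_mul]
      · rw [innerSL_apply_apply, real_inner_self_eq_norm_sq]
    have hinner : ∀ i, ⟪T i f, f⟫_ℝ = ⟪T i f, (Submodule.orthogonalProjection (W i) f : H)⟫_ℝ := by
      intro i
      have horth : f - (Submodule.orthogonalProjection (W i) f : H) ∈ (W i)ᗮ :=
        Submodule.sub_starProjection_mem_orthogonal (K := W i) f
      have := horth (T i f) (hTmem i f)
      rw [inner_sub_right] at this
      linarith [this]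
    -- AM-GM pointwise
    have hpt2 : ∀ i, v i ^ 2 * ⟪T i f, f⟫_ℝ ≤
        (D / 2) * (v i ^ 2 * ‖T i f‖ ^ 2)
          + (1 / (2 * D)) * (v i ^ 2 * ‖(Submodule.orthogonalProjection (W i) f : H)‖ ^ 2) := by
      intro i
      rw [hinner i]
      have hcs : ⟪T i f, (Submodule.orthogonalProjection (W i) f : H)⟫_ℝ ≤
          ‖T i f‖ * ‖(Submodule.orthogonalProjection (W i) f : H)‖ := real_inner_le_norm _ _
      have hamgm : ‖T i f‖ * ‖(Submodule.orthogonalProjection (W i) f : H)‖ ≤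
          (D / 2) * ‖T i f‖ ^ 2 + (1 / (2 * D)) * ‖(Submodule.orthogonalProjection (W i) f : H)‖ ^ 2 := by
        have hD' : (0:ℝ) < 2 * D := by linarith
        have heq : (D / 2) * ‖T i f‖ ^ 2 + (1 / (2 * D)) * ‖(Submodule.orthogonalProjection (W i) f : H)‖ ^ 2
            = (D ^ 2 * ‖T i f‖ ^ 2 + ‖(Submodule.orthogonalProjection (W i) f : H)‖ ^ 2) / (2 * D) := by
          field_simp
        rw [heq, le_div_iff₀ hD']
        nlinarith [sq_nonneg (D * ‖T i f‖ - ‖(Submodule.orthogonalProjection (W i) f : H)‖)]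
      have hv2 : (0:ℝ) ≤ v i ^ 2 := sq_nonneg _
      nlinarith [mul_le_mul_of_nonneg_left (hcs.trans hamgm) hv2]
    have hSumRHS : Summable (fun i =>
        (D / 2) * (v i ^ 2 * ‖T i f‖ ^ 2)
          + (1 / (2 * D)) * (v i ^ 2 * ‖(Submodule.orthogonalProjection (W i) f : H)‖ ^ 2)) :=
      (hS.mul_left _).add (hsum_pi.mul_left _)
    have hle : ‖f‖ ^ 2 ≤ (D / 2) * (∑' i, v i ^ 2 * ‖T i f‖ ^ 2)
        + (1 / (2 * D)) * (∑' i, v i ^ 2 * ‖(Submodule.orthogonalProjection (W i) f : H)‖ ^ 2) := by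
      have := Summable.tsum_le_tsum hpt2 h1.summable hSumRHS
      rw [h1.tsum_eq] at this
      rwa [Summable.tsum_add (hS.mul_left _) (hsum_pi.mul_left _), tsum_mul_left, tsum_mul_left] at this
    have hup' : (1 / (2 * D)) * (∑' i, v i ^ 2 * ‖(Submodule.orthogonalProjection (W i) f : H)‖ ^ 2)
        ≤ (1 / (2 * D)) * (D * ‖f‖ ^ 2) :=
      mul_le_mul_of_nonneg_left hup (by positivity)
    have hsimp : (1 / (2 * D)) * (D * ‖f‖ ^ 2) = ‖f‖ ^ 2 / 2 := by
      field_simp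
    rw [one_div, inv_mul_le_iff₀ hD]
    nlinarith [hle, hup', hsimp]
  · -- upper bound
    have hEnn : 0 ≤ E := le_trans (sq_nonneg _) (hE (Classical.arbitrary I))
    have h := Summable.tsum_le_tsum hpt hS (hsum_pi.mul_left E)
    rw [tsum_mul_left] at h
    calc ∑' i, v i ^ 2 * ‖T i f‖ ^ 2
        ≤ E * ∑' i, v i ^ 2 * ‖(Submodule.orthogonalProjection (W i) f : H)‖ ^ 2 := h
      _ ≤ E * (D * ‖f‖ ^ 2) := mul_le_mul_of_nonneg_left hup hEnn
      _ = (D * E) * ‖f‖ ^ 2 := by ring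
end

section
/- Let {W_i}_{i∈I} be a frame of subspaces with respect to {v_i} for H. The following are equivalent: (1) {W_i} is a Riesz decomposition of H (every f ∈ H has a unique representation f = Σ_i f_i with f_i ∈ W_i); (2) {W_i} is minimal (W_i ∩ closed-span of {W_j : j ≠ i} = {0} for every i); (3) the synthesis operator T_{W,v}({f_i}) = Σ_i v_i f_i is injective on (Σ_i ⊕ W_i)_{ℓ²}; (4) the analysis operator T*_{W,v} is surjective. -/
open scoped InnerProductSpace ENNReal NNReal

private lemma two_rpow_aux (x : ℝ) : x ^ (2 : ℝ≥0∞).toReal = x ^ 2 := by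
  rw [show (2 : ℝ≥0∞).toReal = ((2 : ℕ) : ℝ) by norm_num, Real.rpow_natCast]

/-- A bounded-below operator between Hilbert spaces whose range has trivial orthogonal
complement is surjective. -/
private lemma aux_surj {E F : Type*} [NormedAddCommGroup E] [InnerProductSpace ℝ E]
    [CompleteSpace E] [NormedAddCommGroup F] [InnerProductSpace ℝ F] [CompleteSpace F]
    (A : E →L[ℝ] F) {c : ℝ} (hc : 0 < c) (hb : ∀ x, c * ‖x‖ ≤ ‖A x‖)
    (horth : ∀ y : F, (∀ x, ⟪A x, y⟫_ℝ = 0) → y = 0) : Function.Surjective A := by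
  have hanti : AntilipschitzWith ⟨c⁻¹, by positivity⟩ A := by
    apply A.antilipschitz_of_bound
    intro x
    show ‖x‖ ≤ c⁻¹ * ‖A x‖
    rw [← div_eq_inv_mul, le_div_iff₀ hc]
    linarith [hb x]
  set R : Submodule ℝ F := LinearMap.range (A : E →ₗ[ℝ] F) with hRdef
  have hcl : IsClosed (R : Set F) := by
    have : (R : Set F) = Set.range A := by
      ext y; simp [hRdef, LinearMap.mem_range, Set.mem_range]
    rw [this]
    exact hanti.isClosed_range A.uniformContinuous
  have hRtc : R.topologicalClosure = R :=
    le_antisymm (R.topologicalClosure_minimal le_rfl hcl) R.le_topologicalClosure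
  have horthR : Rᗮ = ⊥ := by
    rw [Submodule.eq_bot_iff]
    intro y hy
    exact horth y fun x => hy (A x) ⟨x, rfl⟩
  have hRtop : R = ⊤ := by
    have h2 : Rᗮᗮ = ⊤ := by rw [horthR, Submodule.bot_orthogonal_eq_top]
    rw [Submodule.orthogonal_orthogonal_eq_closure, hRtc] at h2
    exact h2
  intro y
  have : y ∈ R := by rw [hRtop]; trivial
  exact this

set_option maxHeartbeats 1000000 in
/-- For a frame of subspaces with synthesis operator `T`, the
following are equivalent: (1) `{W_i}` is a Riesz decomposition of `H`; (2) `{W_i}` is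
minimal; (3) `T` is injective; (4) the analysis operator `T*` is surjective. -/
theorem riesz_decomposition_tfae
    {H : Type*} [NormedAddCommGroup H] [InnerProductSpace ℝ H] [CompleteSpace H]
    {I : Type*} (W : I → Submodule ℝ H) [∀ i, CompleteSpace (W i)]
    (v : I → ℝ) (hv : ∀ i, 0 < v i) (C D : ℝ) (hC : 0 < C) (hCD : C ≤ D)
    (hframe : ∀ f : H,
      Summable (fun i => v i ^ 2 * ‖(Submodule.orthogonalProjectionOnto (W i) f : H)‖ ^ 2) ∧
      C * ‖f‖ ^ 2 ≤ ∑' i, v i ^ 2 * ‖(Submodule.orthogonalProjectionOnto (W i) f : H)‖ ^ 2 ∧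
      ∑' i, v i ^ 2 * ‖(Submodule.orthogonalProjectionOnto (W i) f : H)‖ ^ 2 ≤ D * ‖f‖ ^ 2)
    (T : lp (fun i => ↥(W i)) 2 →L[ℝ] H)
    (hT : ∀ g : lp (fun i => ↥(W i)) 2, HasSum (fun i => v i • (g i : H)) (T g)) :
    ((∀ f : H, ∃! g : lp (fun i => ↥(W i)) 2, HasSum (fun i => (g i : H)) f) ↔
      (∀ i, W i ⊓ (⨆ j ∈ ({i}ᶜ : Set I), W j).topologicalClosure = ⊥)) ∧
    ((∀ f : H, ∃! g : lp (fun i => ↥(W i)) 2, HasSum (fun i => (g i : H)) f) ↔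
      Function.Injective T) ∧
    ((∀ f : H, ∃! g : lp (fun i => ↥(W i)) 2, HasSum (fun i => (g i : H)) f) ↔
      Function.Surjective (ContinuousLinearMap.adjoint T)) := by
  classical
  have hp : 0 < (2 : ℝ≥0∞).toReal := by norm_num
  -- pointwise weight bound
  have hvD : ∀ (i : I) (x : W i), v i ^ 2 * ‖(x : H)‖ ^ 2 ≤ D * ‖(x : H)‖ ^ 2 := by
    intro i x
    obtain ⟨hs, -, hub⟩ := hframe (x : H)
    have hx : (Submodule.orthogonalProjectionOnto (W i) (x : H) : H) = (x : H) := by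
      rw [Submodule.orthogonalProjectionOnto_mem_subspace_eq_self]
    have h1 : v i ^ 2 * ‖(Submodule.orthogonalProjectionOnto (W i) (x : H) : H)‖ ^ 2 ≤
        ∑' j, v j ^ 2 * ‖(Submodule.orthogonalProjectionOnto (W j) (x : H) : H)‖ ^ 2 :=
      hs.le_tsum i fun j _ => by positivity
    rw [hx] at h1
    exact h1.trans hub
  -- scaling by `v` stays in `ℓ²`
  have hmem : ∀ g : lp (fun i => ↥(W i)) 2, Memℓp (fun i => v i • g i) 2 := by
    intro g
    apply memℓp_gen
    have hg : Summable fun i => ‖g i‖ ^ (2 : ℝ≥0∞).toReal := (memℓp_gen_iff hp).1 (lp.memℓp g)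
    simp only [two_rpow_aux] at hg ⊢
    refine Summable.of_nonneg_of_le (fun i => by positivity) (fun i => ?_) (hg.mul_left D)
    have hcoe : ‖v i • g i‖ = ‖v i • (g i : H)‖ := rfl
    have hcn : ‖g i‖ = ‖(g i : H)‖ := rfl
    rw [hcoe, hcn, norm_smul, Real.norm_eq_abs, abs_of_pos (hv i), mul_pow]
    exact hvD i (g i)
  -- adjoint formula
  have hadj : ∀ (f : H) (i : I), ((ContinuousLinearMap.adjoint T f) i : H)
      = v i • (Submodule.orthogonalProjectionOnto (W i) f : H) := by
    intro f i
    have hsingle : ∀ w : W i, T (lp.single (E := fun k => ↥(W k)) 2 i w) = v i • (w : H) := by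
      intro w
      refine (hT (lp.single (E := fun k => ↥(W k)) 2 i w)).unique ?_
      have heq : (fun j => v j • ((lp.single (E := fun k => ↥(W k)) 2 i w) j : H)) =
          fun j => if j = i then v i • (w : H) else 0 := by
        funext j
        by_cases h : j = i
        · subst h; rw [lp.single_apply_self (E := fun k => ↥(W k))]; simp
        · rw [lp.single_apply_ne (E := fun k => ↥(W k)) 2 i w h]; simp [h]
      rw [heq]
      exact hasSum_ite_eq i (v i • (w : H))
    have key : ∀ w : W i, ⟪((ContinuousLinearMap.adjoint T f) i : H), (w : H)⟫_ℝ =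
        ⟪v i • (Submodule.orthogonalProjectionOnto (W i) f : H), (w : H)⟫_ℝ := by
      intro w
      have h1 : ⟪(ContinuousLinearMap.adjoint T f) i, w⟫_ℝ =
          ⟪ContinuousLinearMap.adjoint T f, lp.single (E := fun k => ↥(W k)) 2 i w⟫_ℝ :=
        (lp.inner_single_right (𝕜 := ℝ) i w (ContinuousLinearMap.adjoint T f)).symm
      have h2 : ⟪ContinuousLinearMap.adjoint T f, lp.single (E := fun k => ↥(W k)) 2 i w⟫_ℝ =
          ⟪f, T (lp.single (E := fun k => ↥(W k)) 2 i w)⟫_ℝ :=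
        ContinuousLinearMap.adjoint_inner_left T (lp.single (E := fun k => ↥(W k)) 2 i w) f
      have h3 : ⟪f, T (lp.single (E := fun k => ↥(W k)) 2 i w)⟫_ℝ = v i * ⟪f, (w : H)⟫_ℝ := by
        rw [hsingle w, real_inner_smul_right]
      have h4 : ⟪f, (w : H)⟫_ℝ = ⟪(Submodule.orthogonalProjectionOnto (W i) f : H), (w : H)⟫_ℝ := by
        have h0 : ⟪f - (Submodule.orthogonalProjectionOnto (W i) f : H), (w : H)⟫_ℝ = 0 :=
          (W i).starProjection_inner_eq_zero f (w : H) w.2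
        rw [inner_sub_left, sub_eq_zero] at h0
        exact h0
      calc ⟪((ContinuousLinearMap.adjoint T f) i : H), (w : H)⟫_ℝ
          = ⟪(ContinuousLinearMap.adjoint T f) i, w⟫_ℝ := (Submodule.coe_inner _ _ _).symm
        _ = v i * ⟪f, (w : H)⟫_ℝ := by rw [h1, h2, h3]
        _ = v i * ⟪(Submodule.orthogonalProjectionOnto (W i) f : H), (w : H)⟫_ℝ := by rw [h4]
        _ = ⟪v i • (Submodule.orthogonalProjectionOnto (W i) f : H), (w : H)⟫_ℝ :=
          (real_inner_smul_left _ _ _).symm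
    have hbmem : v i • (Submodule.orthogonalProjectionOnto (W i) f : H) ∈ W i :=
      Submodule.smul_mem _ _ (Submodule.coe_mem _)
    have hzero : ⟪((ContinuousLinearMap.adjoint T f) i : H) -
        v i • (Submodule.orthogonalProjectionOnto (W i) f : H),
        ((ContinuousLinearMap.adjoint T f) i : H) -
        v i • (Submodule.orthogonalProjectionOnto (W i) f : H)⟫_ℝ = 0 := by
      have hk := key ((ContinuousLinearMap.adjoint T f) i -
        (⟨v i • (Submodule.orthogonalProjectionOnto (W i) f : H), hbmem⟩ : W i))
      have hcoe2 : (((ContinuousLinearMap.adjoint T f) i -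
          (⟨v i • (Submodule.orthogonalProjectionOnto (W i) f : H), hbmem⟩ : W i) : W i) : H) =
          ((ContinuousLinearMap.adjoint T f) i : H) -
          v i • (Submodule.orthogonalProjectionOnto (W i) f : H) := rfl
      rw [hcoe2] at hk
      rw [inner_sub_left]
      linarith [hk]
    rw [← sub_eq_zero]
    exact inner_self_eq_zero.mp hzero
  -- norm formula for the analysis operator
  have hnorm : ∀ f : H, ‖ContinuousLinearMap.adjoint T f‖ ^ 2 =
      ∑' i, v i ^ 2 * ‖(Submodule.orthogonalProjectionOnto (W i) f : H)‖ ^ 2 := by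
    intro f
    have h := lp.norm_rpow_eq_tsum hp (ContinuousLinearMap.adjoint T f)
    simp only [two_rpow_aux] at h
    rw [h]
    refine tsum_congr fun i => ?_
    have h1 : ‖(ContinuousLinearMap.adjoint T f) i‖ =
        ‖((ContinuousLinearMap.adjoint T f) i : H)‖ := rfl
    rw [h1, hadj f i, norm_smul, Real.norm_eq_abs, abs_of_pos (hv i), mul_pow]
  have hlow : ∀ f : H, C * ‖f‖ ^ 2 ≤ ‖ContinuousLinearMap.adjoint T f‖ ^ 2 := by
    intro f
    rw [hnorm f]
    exact (hframe f).2.1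
  have hsqrt : ∀ x : H, Real.sqrt C * ‖x‖ ≤ ‖ContinuousLinearMap.adjoint T x‖ := by
    intro x
    have h := hlow x
    have h2 : Real.sqrt (C * ‖x‖ ^ 2) ≤ Real.sqrt (‖ContinuousLinearMap.adjoint T x‖ ^ 2) :=
      Real.sqrt_le_sqrt h
    rwa [Real.sqrt_mul hC.le, Real.sqrt_sq (norm_nonneg _), Real.sqrt_sq (norm_nonneg _)] at h2
  -- surjectivity of the frame operator S = T ∘ T*
  have hSsurj : Function.Surjective (T ∘L ContinuousLinearMap.adjoint T) := by
    have hinner : ∀ x : H, ⟪(T ∘L ContinuousLinearMap.adjoint T) x, x⟫_ℝ =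
        ‖ContinuousLinearMap.adjoint T x‖ ^ 2 := by
      intro x
      have h1 : ⟪ContinuousLinearMap.adjoint T x, ContinuousLinearMap.adjoint T x⟫_ℝ =
          ⟪x, T (ContinuousLinearMap.adjoint T x)⟫_ℝ :=
        ContinuousLinearMap.adjoint_inner_left T (ContinuousLinearMap.adjoint T x) x
      have h2 : (T ∘L ContinuousLinearMap.adjoint T) x = T (ContinuousLinearMap.adjoint T x) :=
        rfl
      rw [h2, real_inner_comm, ← h1, real_inner_self_eq_norm_sq]
    apply aux_surj _ hC
    · intro x
      have h1 := hlow x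
      have h2 := hinner x
      have h3 : ⟪(T ∘L ContinuousLinearMap.adjoint T) x, x⟫_ℝ ≤
          ‖(T ∘L ContinuousLinearMap.adjoint T) x‖ * ‖x‖ := real_inner_le_norm _ _
      rcases eq_or_lt_of_le (norm_nonneg x) with h0 | h0
      · rw [← h0, mul_zero]
        exact norm_nonneg _
      · refine le_of_mul_le_mul_right ?_ h0
        nlinarith
    · intro y hy
      have h1 := hy y
      rw [hinner y] at h1
      have h2 := hlow y
      have h3 : ‖y‖ ^ 2 = 0 := le_antisymm (by nlinarith) (sq_nonneg _)
      have h4 : ‖y‖ = 0 := by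
        exact pow_eq_zero_iff two_ne_zero |>.mp h3
      exact norm_eq_zero.mp h4
  -- existence of representations
  have hex : ∀ f : H, ∃ g : lp (fun i => ↥(W i)) 2, HasSum (fun i => (g i : H)) f := by
    intro f
    obtain ⟨h, hh⟩ := hSsurj f
    set g' := ContinuousLinearMap.adjoint T h with hg'
    refine ⟨⟨fun i => v i • g' i, hmem g'⟩, ?_⟩
    have hco : (fun i => (((⟨fun i => v i • g' i, hmem g'⟩ : lp (fun i => ↥(W i)) 2)) i : H)) =
        fun i => v i • (g' i : H) := rfl
    rw [hco]
    have hs := hT g'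
    have : T g' = f := hh
    rwa [this] at hs
  -- (1) → (3)
  have h1 : (∀ f : H, ∃! g : lp (fun i => ↥(W i)) 2, HasSum (fun i => (g i : H)) f) →
      Function.Injective T := by
    intro hP g₁ g₂ hgg
    rw [← sub_eq_zero]
    set d := g₁ - g₂ with hd
    have hTd : T d = 0 := by rw [hd, map_sub, hgg, sub_self]
    set e : lp (fun i => ↥(W i)) 2 := ⟨fun i => v i • d i, hmem d⟩ with he
    have hs1 : HasSum (fun i => (e i : H)) 0 := by
      have hco : (fun i => (e i : H)) = fun i => v i • (d i : H) := rfl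
      rw [hco]
      have := hT d
      rwa [hTd] at this
    have hs0 : HasSum (fun i => (((0 : lp (fun i => ↥(W i)) 2)) i : H)) 0 := by
      have hco : (fun i => (((0 : lp (fun i => ↥(W i)) 2)) i : H)) = fun _ => (0 : H) := by
        funext i; simp
      rw [hco]
      exact hasSum_zero
    have he0 : e = 0 := (hP 0).unique hs1 hs0
    have hcomp : ∀ i, v i • d i = (0 : W i) := by
      intro i
      have := congrArg (fun z : lp (fun i => ↥(W i)) 2 => z i) he0
      simpa [he] using this
    apply lp.ext
    funext i
    have := hcomp i
    rcases smul_eq_zero.mp this with h | h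
    · exact absurd h (hv i).ne'
    · simpa using h
  -- (3) → (4)
  have h2 : Function.Injective T → Function.Surjective (ContinuousLinearMap.adjoint T) := by
    intro hinj
    apply aux_surj _ (Real.sqrt_pos.mpr hC) hsqrt
    intro y hy
    have hTy : T y = 0 := by
      have h1 := hy (T y)
      have h2 : ⟪ContinuousLinearMap.adjoint T (T y), y⟫_ℝ = ⟪T y, T y⟫_ℝ :=
        ContinuousLinearMap.adjoint_inner_left T y (T y)
      rw [h2] at h1
      exact inner_self_eq_zero.mp h1
    have : T y = T 0 := by rw [hTy, map_zero]
    exact hinj this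
  -- (4) → (2)
  have h3 : Function.Surjective (ContinuousLinearMap.adjoint T) →
      ∀ i, W i ⊓ (⨆ j ∈ ({i}ᶜ : Set I), W j).topologicalClosure = ⊥ := by
    intro hsurj i
    rw [eq_bot_iff]
    rintro x hx
    obtain ⟨hx1, hx2⟩ := Submodule.mem_inf.mp hx
    obtain ⟨f, hf⟩ := hsurj (lp.single (E := fun k => ↥(W k)) 2 i (v i • ⟨x, hx1⟩))
    have hfi : (Submodule.orthogonalProjectionOnto (W i) f : H) = x := by
      have h0 := congrArg (fun z : lp (fun i => ↥(W i)) 2 => (z i : H)) hf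
      simp only at h0
      rw [hadj f i] at h0
      have h1 : ((lp.single (E := fun k => ↥(W k)) 2 i (v i • (⟨x, hx1⟩ : W i))) i : H) = v i • x := by
        rw [lp.single_apply_self (E := fun k => ↥(W k))]; rfl
      rw [h1] at h0
      exact smul_right_injective H (hv i).ne' h0
    have hfj : ∀ j, j ≠ i → (Submodule.orthogonalProjectionOnto (W j) f : H) = 0 := by
      intro j hj
      have h0 := congrArg (fun z : lp (fun i => ↥(W i)) 2 => (z j : H)) hf
      simp only at h0
      rw [hadj f j] at h0
      have h1 : ((lp.single (E := fun k => ↥(W k)) 2 i (v i • (⟨x, hx1⟩ : W i))) j : H) = 0 := by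
        rw [lp.single_apply_ne (E := fun k => ↥(W k)) 2 i _ hj]; rfl
      rw [h1] at h0
      rcases smul_eq_zero.mp h0 with h | h
      · exact absurd h (hv j).ne'
      · exact h
    have hforth : ∀ j, j ≠ i → ∀ w ∈ W j, ⟪f, w⟫_ℝ = 0 := by
      intro j hj w hw
      have h0 : ⟪f - (Submodule.orthogonalProjectionOnto (W j) f : H), w⟫_ℝ = 0 :=
        (W j).starProjection_inner_eq_zero f w hw
      rw [inner_sub_left, sub_eq_zero] at h0
      rw [h0, hfj j hj, inner_zero_left]
    set φ : H →L[ℝ] ℝ := innerSL ℝ f with hφ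
    have hker : (⨆ j ∈ ({i}ᶜ : Set I), W j) ≤ LinearMap.ker (φ : H →ₗ[ℝ] ℝ) := by
      refine iSup₂_le fun j hj => ?_
      intro w hw
      have hj' : j ≠ i := hj
      simp only [LinearMap.mem_ker]
      show ⟪f, w⟫_ℝ = 0
      exact hforth j hj' w hw
    have hclosed : IsClosed ((LinearMap.ker (φ : H →ₗ[ℝ] ℝ) : Submodule ℝ H) : Set H) := ContinuousLinearMap.isClosed_ker φ
    have hker2 : (⨆ j ∈ ({i}ᶜ : Set I), W j).topologicalClosure ≤ LinearMap.ker (φ : H →ₗ[ℝ] ℝ) :=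
      Submodule.topologicalClosure_minimal _ hker hclosed
    have hfx : ⟪f, x⟫_ℝ = 0 := hker2 hx2
    have h0 : ⟪f - (Submodule.orthogonalProjectionOnto (W i) f : H), x⟫_ℝ = 0 :=
      (W i).starProjection_inner_eq_zero f x hx1
    rw [inner_sub_left, sub_eq_zero] at h0
    rw [h0, hfi] at hfx
    have : x = 0 := inner_self_eq_zero.mp hfx
    simp [this]
  -- (2) → (1)
  have h4 : (∀ i, W i ⊓ (⨆ j ∈ ({i}ᶜ : Set I), W j).topologicalClosure = ⊥) →
      ∀ f : H, ∃! g : lp (fun i => ↥(W i)) 2, HasSum (fun i => (g i : H)) f := by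
    intro hmin f
    obtain ⟨g, hg⟩ := hex f
    refine ⟨g, hg, ?_⟩
    intro g' hg'
    have hd : HasSum (fun i => ((g' - g) i : H)) 0 := by
      have hs := hg'.sub hg
      rw [sub_self] at hs
      have hco : (fun i => ((g' - g) i : H)) = fun i => (g' i : H) - (g i : H) := by
        funext i; simp
      rw [hco]
      exact hs
    have hz : ∀ i, ((g' - g) i : H) = 0 := by
      intro i
      have hupd := hd.update i 0
      have h5 : HasSum (Function.update (fun j => ((g' - g) j : H)) i 0)
          (-(((g' - g) i : H))) := by
        simpa using hupd
      have hmemsup : -(((g' - g) i : H)) ∈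
          (⨆ j ∈ ({i}ᶜ : Set I), W j).topologicalClosure := by
        rw [← SetLike.mem_coe, Submodule.topologicalClosure_coe]
        refine mem_closure_of_tendsto h5 (Filter.Eventually.of_forall fun s => ?_)
        rw [SetLike.mem_coe]
        refine Submodule.sum_mem _ fun j _ => ?_
        by_cases hji : j = i
        · subst hji
          rw [Function.update_self]
          exact Submodule.zero_mem _
        · rw [Function.update_of_ne hji]
          have hWj : W j ≤ ⨆ j ∈ ({i}ᶜ : Set I), W j :=
            le_biSup W (by simp [hji])
          exact hWj (Submodule.coe_mem _)
      have hmem2 : ((g' - g) i : H) ∈ W i ⊓ (⨆ j ∈ ({i}ᶜ : Set I), W j).topologicalClosure := by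
        refine Submodule.mem_inf.mpr ⟨Submodule.coe_mem _, ?_⟩
        have := Submodule.neg_mem _ hmemsup
        simpa using this
      rw [hmin i] at hmem2
      simpa using hmem2
    have : g' - g = 0 := by
      apply lp.ext
      funext i
      have := hz i
      simpa [Submodule.coe_eq_zero] using (Subtype.ext this : (g' - g) i = 0)
    rw [← sub_eq_zero]
    exact this
  exact ⟨⟨fun hP => h3 (h2 (h1 hP)), h4⟩,
    ⟨h1, fun hI => h4 (h3 (h2 hI))⟩,
    ⟨fun hP => h2 (h1 hP), fun hS => h4 (h3 hS)⟩⟩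
end

section
/- Let {f_j}_{j∈J} be a frame for H with bounds A and B, let {J_i}_{i∈I} be a partition of J, and let W_i be the closed linear span of {f_j : j ∈ J_i}. Then for all f ∈ H, (A/B)‖f‖² ≤ Σ_{i∈I} ‖π_{W_i}(f)‖². Consequently, if I is finite, {W_i}_{i∈I} is a 1-uniform frame of subspaces for H with bounds A/B and |I|. -/
open scoped InnerProductSpace

/-- Partitioning a frame `{f_j}` with bounds `A, B` into pieces
spanning subspaces `W_i` gives `(A/B)‖f‖² ≤ Σ_i ‖π_{W_i} f‖²` (right side in `[0,∞]`);
if `I` is finite, `{W_i}` is a 1-uniform frame of subspaces with bounds `A/B`, `|I|`. -/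
theorem frame_partition_lower_bound
    {H : Type*} [NormedAddCommGroup H] [InnerProductSpace ℝ H] [CompleteSpace H]
    {J : Type*} (F : J → H) (A B : ℝ) (hA : 0 < A) (hAB : A ≤ B)
    (hframe : ∀ f : H,
      Summable (fun j => (inner ℝ f (F j) : ℝ) ^ 2) ∧
      A * ‖f‖ ^ 2 ≤ ∑' j, (inner ℝ f (F j) : ℝ) ^ 2 ∧
      ∑' j, (inner ℝ f (F j) : ℝ) ^ 2 ≤ B * ‖f‖ ^ 2)
    {I : Type*} (P : I → Set J)
    (hcover : ∀ j : J, ∃ i, j ∈ P i) (hdisj : Pairwise (Function.onFun Disjoint P))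
    (W : I → Submodule ℝ H) [∀ i, CompleteSpace (W i)]
    (hW : ∀ i, W i = (Submodule.span ℝ (F '' P i)).topologicalClosure) :
    (∀ f : H,
      ENNReal.ofReal ((A / B) * ‖f‖ ^ 2) ≤
        ∑' i, ENNReal.ofReal (‖(Submodule.orthogonalProjection (W i) f : H)‖ ^ 2)) ∧
    (Finite I → ∀ f : H,
      Summable (fun i => ‖(Submodule.orthogonalProjection (W i) f : H)‖ ^ 2) ∧
      (A / B) * ‖f‖ ^ 2 ≤ ∑' i, ‖(Submodule.orthogonalProjection (W i) f : H)‖ ^ 2 ∧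
      ∑' i, ‖(Submodule.orthogonalProjection (W i) f : H)‖ ^ 2 ≤ (Nat.card I : ℝ) * ‖f‖ ^ 2) := by
  have hB : 0 < B := lt_of_lt_of_le hA hAB
  have hmem : ∀ i, ∀ j ∈ P i, F j ∈ W i := by
    intro i j hj
    rw [hW]
    exact Submodule.le_topologicalClosure _ (Submodule.subset_span ⟨j, hj, rfl⟩)
  -- the equivalence between the sigma type of the partition and J
  have hinj : Function.Injective (fun p : Σ i, P i => (p.2 : J)) := by
    rintro ⟨i, j, hj⟩ ⟨i', j', hj'⟩ h
    simp only at h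
    subst h
    rcases eq_or_ne i i' with rfl | hne
    · rfl
    · exact absurd hj' (Set.disjoint_left.mp (hdisj hne) hj)
  have hsurj : Function.Surjective (fun p : Σ i, P i => (p.2 : J)) := by
    intro j
    obtain ⟨i, hi⟩ := hcover j
    exact ⟨⟨i, j, hi⟩, rfl⟩
  let e : (Σ i, P i) ≃ J := Equiv.ofBijective _ ⟨hinj, hsurj⟩
  set c : H → J → ENNReal := fun f j => ENNReal.ofReal ((inner ℝ f (F j) : ℝ) ^ 2) with hc
  have hsumc : ∀ f : H, ∑' j, c f j = ENNReal.ofReal (∑' j, (inner ℝ f (F j) : ℝ) ^ 2) := by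
    intro f
    rw [ENNReal.ofReal_tsum_of_nonneg (fun j => sq_nonneg _) (hframe f).1]
  -- per-piece bound
  have hpiece : ∀ f : H, ∀ i : I,
      (∑' j : P i, c f j) ≤ ENNReal.ofReal (B * ‖(Submodule.orthogonalProjection (W i) f : H)‖ ^ 2) := by
    intro f i
    set g : H := (Submodule.orthogonalProjection (W i) f : H) with hg
    have hsame : ∀ j : P i, c f j = c g j := by
      rintro ⟨j, hj⟩
      have h0 : (inner ℝ (f - g) (F j) : ℝ) = 0 :=
        Submodule.starProjection_inner_eq_zero f (F j) (hmem i j hj)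
      have : (inner ℝ f (F j) : ℝ) = inner ℝ g (F j) := by
        have := inner_sub_left (𝕜 := ℝ) f g (F j)
        rw [h0] at this
        linarith
      simp [hc, this]
    calc (∑' j : P i, c f j) = ∑' j : P i, c g j := tsum_congr hsame
      _ ≤ ∑' j : J, c g j := ENNReal.tsum_comp_le_tsum_of_injective Subtype.coe_injective _
      _ = ENNReal.ofReal (∑' j, (inner ℝ g (F j) : ℝ) ^ 2) := hsumc g
      _ ≤ ENNReal.ofReal (B * ‖g‖ ^ 2) := ENNReal.ofReal_le_ofReal (hframe g).2.2
  -- main ENNReal lower bound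
  have hmain : ∀ f : H,
      ENNReal.ofReal ((A / B) * ‖f‖ ^ 2) ≤
        ∑' i, ENNReal.ofReal (‖(Submodule.orthogonalProjection (W i) f : H)‖ ^ 2) := by
    intro f
    have hAf : ENNReal.ofReal (A * ‖f‖ ^ 2) ≤
        ENNReal.ofReal B * ∑' i, ENNReal.ofReal (‖(Submodule.orthogonalProjection (W i) f : H)‖ ^ 2) := by
      calc ENNReal.ofReal (A * ‖f‖ ^ 2)
          ≤ ENNReal.ofReal (∑' j, (inner ℝ f (F j) : ℝ) ^ 2) :=
            ENNReal.ofReal_le_ofReal (hframe f).2.1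
        _ = ∑' j, c f j := (hsumc f).symm
        _ = ∑' p : Σ i, P i, c f (e p) := (e.tsum_eq _).symm
        _ = ∑' i, ∑' j : P i, c f j := ENNReal.tsum_sigma' _
        _ ≤ ∑' i, ENNReal.ofReal (B * ‖(Submodule.orthogonalProjection (W i) f : H)‖ ^ 2) :=
            ENNReal.tsum_le_tsum (hpiece f)
        _ = ∑' i, ENNReal.ofReal B * ENNReal.ofReal (‖(Submodule.orthogonalProjection (W i) f : H)‖ ^ 2) := by
            congr 1; ext i; rw [ENNReal.ofReal_mul hB.le]
        _ = ENNReal.ofReal B * ∑' i, ENNReal.ofReal (‖(Submodule.orthogonalProjection (W i) f : H)‖ ^ 2) :=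
            (ENNReal.tsum_mul_left)
    have hdivEq : ENNReal.ofReal ((A / B) * ‖f‖ ^ 2)
        = ENNReal.ofReal (A * ‖f‖ ^ 2) / ENNReal.ofReal B := by
      rw [div_mul_eq_mul_div, ENNReal.ofReal_div_of_pos hB]
    rw [hdivEq]
    exact ENNReal.div_le_of_le_mul' hAf
  refine ⟨hmain, ?_⟩
  intro hI f
  have := Fintype.ofFinite I
  have hsummable : Summable (fun i => ‖(Submodule.orthogonalProjection (W i) f : H)‖ ^ 2) :=
    Summable.of_finite
  refine ⟨hsummable, ?_, ?_⟩
  · -- convert ENNReal bound to real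
    have h := hmain f
    rw [← ENNReal.ofReal_tsum_of_nonneg (fun i => sq_nonneg _) hsummable] at h
    have hnn : (0:ℝ) ≤ ∑' i, ‖(Submodule.orthogonalProjection (W i) f : H)‖ ^ 2 :=
      tsum_nonneg fun i => sq_nonneg _
    exact (ENNReal.ofReal_le_ofReal_iff hnn).mp h
  · rw [tsum_fintype]
    calc ∑ i, ‖(Submodule.orthogonalProjection (W i) f : H)‖ ^ 2
        ≤ ∑ _i : I, ‖f‖ ^ 2 := by
          apply Finset.sum_le_sum
          intro i _
          have h1 : ‖(Submodule.orthogonalProjection (W i) f : H)‖ ≤ ‖f‖ := by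
            have := (Submodule.orthogonalProjection (W i)).le_opNorm f
            calc ‖(Submodule.orthogonalProjection (W i) f : H)‖ = ‖Submodule.orthogonalProjection (W i) f‖ := rfl
              _ ≤ ‖Submodule.orthogonalProjection (W i)‖ * ‖f‖ := this
              _ ≤ 1 * ‖f‖ := by
                  exact mul_le_mul_of_nonneg_right (Submodule.orthogonalProjection_norm_le _) (norm_nonneg f)
              _ = ‖f‖ := one_mul _
          exact pow_le_pow_left₀ (norm_nonneg _) h1 2
      _ = (Nat.card I : ℝ) * ‖f‖ ^ 2 := by
          rw [Finset.sum_const, Finset.card_univ, Nat.card_eq_fintype_card, nsmul_eq_mul]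
end

section
/- Let {f_j}_{j∈J} be a frame for H with bounds A, B, let J = J_1 ∪ … ∪ J_n be a finite partition, let v_1,…,v_n > 0, and let W_i be the closed span of {f_j : j ∈ J_i}. Then {W_i}_{i=1}^n is a frame of subspaces with respect to {v_i}_{i=1}^n for H, with lower bound (A/B)·min_i v_i² and upper bound n·max_i v_i². -/
open scoped InnerProductSpace

/-- A finite partition of a frame `{f_j}` with bounds `A, B` into `n`
pieces spanning subspaces `W_1, …, W_n`, with weights `v_1, …, v_n > 0`, yields a frame
of subspaces with lower bound `(A/B)·min_i v_i²` and upper bound `n·max_i v_i²`. -/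
theorem finite_partition_fusionFrame
    {H : Type*} [NormedAddCommGroup H] [InnerProductSpace ℝ H] [CompleteSpace H]
    {J : Type*} (F : J → H) (A B : ℝ) (hA : 0 < A) (hAB : A ≤ B)
    (hframe : ∀ f : H,
      Summable (fun j => (inner ℝ f (F j) : ℝ) ^ 2) ∧
      A * ‖f‖ ^ 2 ≤ ∑' j, (inner ℝ f (F j) : ℝ) ^ 2 ∧
      ∑' j, (inner ℝ f (F j) : ℝ) ^ 2 ≤ B * ‖f‖ ^ 2)
    {n : ℕ} (hn : 0 < n) (P : Fin n → Set J)
    (hcover : ∀ j : J, ∃ i, j ∈ P i) (hdisj : Pairwise (Function.onFun Disjoint P))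
    (v : Fin n → ℝ) (hv : ∀ i, 0 < v i)
    (W : Fin n → Submodule ℝ H) [∀ i, CompleteSpace (W i)]
    (hW : ∀ i, W i = (Submodule.span ℝ (F '' P i)).topologicalClosure) :
    ∀ f : H,
      ((A / B) * ⨅ i, v i ^ 2) * ‖f‖ ^ 2 ≤
        ∑' i, v i ^ 2 * ‖((W i).orthogonalProjectionOnto f : H)‖ ^ 2 ∧
      ∑' i, v i ^ 2 * ‖((W i).orthogonalProjectionOnto f : H)‖ ^ 2 ≤
        ((n : ℝ) * ⨆ i, v i ^ 2) * ‖f‖ ^ 2 := by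
  intro f
  have hB : 0 < B := lt_of_lt_of_le hA hAB
  haveI : Nonempty (Fin n) := ⟨⟨0, hn⟩⟩
  -- the projections
  set q : Fin n → H := fun i => ((W i).orthogonalProjectionOnto f : H) with hq
  -- membership of frame vectors in the subspaces
  have hFW : ∀ i, ∀ j ∈ P i, F j ∈ W i := by
    intro i j hj
    rw [hW i]
    exact (Submodule.le_topologicalClosure _)
      (Submodule.subset_span ⟨j, hj, rfl⟩)
  -- key: for j ∈ P i, ⟨f, F j⟩ = ⟨q i, F j⟩
  have hinner : ∀ i, ∀ j ∈ P i, (inner ℝ f (F j) : ℝ) = inner ℝ (q i) (F j) := by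
    intro i j hj
    have horth : f - q i ∈ (W i)ᗮ := Submodule.sub_starProjection_mem_orthogonal f
    have h0 : (inner ℝ (f - q i) (F j) : ℝ) = 0 := by
      rw [real_inner_comm]; exact horth (F j) (hFW i j hj)
    have := inner_sub_left (𝕜 := ℝ) f (q i) (F j)
    rw [h0] at this
    linarith
  -- per-piece bound : ∑'_{j ∈ P i} ⟨f, F j⟩² ≤ B ‖q i‖²
  have hpiece : ∀ i, (∑' j : P i, (inner ℝ f (F j) : ℝ) ^ 2) ≤ B * ‖q i‖ ^ 2 := by
    intro i
    have hsumq := (hframe (q i)).1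
    have h1 : (∑' j : P i, (inner ℝ f (F j) : ℝ) ^ 2)
        = ∑' j : P i, (inner ℝ (q i) (F (j : J)) : ℝ) ^ 2 := by
      apply tsum_congr
      intro j
      rw [hinner i j j.2]
    rw [h1]
    calc (∑' j : P i, (inner ℝ (q i) (F (j : J)) : ℝ) ^ 2)
        ≤ ∑' j, (inner ℝ (q i) (F j) : ℝ) ^ 2 :=
          Summable.tsum_subtype_le _ _ (fun j => sq_nonneg _) hsumq
      _ ≤ B * ‖q i‖ ^ 2 := (hframe (q i)).2.2
  -- summability and fiberwise decomposition
  have hsumf := (hframe f).1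
  classical
  let φ : J → Fin n := fun j => (hcover j).choose
  have hφ : ∀ j, j ∈ P (φ j) := fun j => (hcover j).choose_spec
  have hPeq : ∀ i, φ ⁻¹' {i} = P i := by
    intro i
    ext j
    simp only [Set.mem_preimage, Set.mem_singleton_iff]
    constructor
    · rintro rfl; exact hφ j
    · intro hj
      by_contra hne
      exact (hdisj hne).le_bot ⟨hφ j, hj⟩ |>.elim
  have hfib : HasSum (fun i => ∑' j : φ ⁻¹' {i}, (inner ℝ f (F j) : ℝ) ^ 2)
      (∑' j, (inner ℝ f (F j) : ℝ) ^ 2) := hsumf.hasSum.tsum_fiberwise φ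
  have hsplit : (∑' j, (inner ℝ f (F j) : ℝ) ^ 2)
      = ∑ i, ∑' j : P i, (inner ℝ f (F j) : ℝ) ^ 2 := by
    have := hfib.tsum_eq
    rw [tsum_fintype] at this
    rw [← this]
    apply Finset.sum_congr rfl
    intro i _
    rw [hPeq i]
  -- infimum and supremum facts
  have hinf_le : ∀ i, (⨅ i, v i ^ 2) ≤ v i ^ 2 := fun i =>
    ciInf_le (Set.Finite.bddBelow (Set.finite_range _)) i
  have hinf_nonneg : (0:ℝ) ≤ ⨅ i, v i ^ 2 := le_ciInf fun i => sq_nonneg _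
  have hsup_le : ∀ i, v i ^ 2 ≤ ⨆ i, v i ^ 2 := fun i =>
    le_ciSup (f := fun i => v i ^ 2) (Set.Finite.bddAbove (Set.finite_range _)) i
  -- norms of projections are bounded by ‖f‖
  have hqle : ∀ i, ‖q i‖ ≤ ‖f‖ := by
    intro i
    have h1 : ‖(W i).orthogonalProjectionOnto f‖ ≤ ‖(W i).orthogonalProjectionOnto‖ * ‖f‖ :=
      ((W i).orthogonalProjectionOnto).le_opNorm f
    have h2 : ‖(W i).orthogonalProjectionOnto‖ * ‖f‖ ≤ 1 * ‖f‖ :=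
      mul_le_mul_of_nonneg_right (Submodule.orthogonalProjectionOnto_norm_le (W i)) (norm_nonneg f)
    calc ‖q i‖ = ‖(W i).orthogonalProjectionOnto f‖ := rfl
      _ ≤ 1 * ‖f‖ := h1.trans h2
      _ = ‖f‖ := one_mul _
  set m := ⨅ i, v i ^ 2 with hm
  constructor
  · -- lower bound
    calc ((A / B) * m) * ‖f‖ ^ 2
        = (m / B) * (A * ‖f‖ ^ 2) := by ring
      _ ≤ (m / B) * ∑' j, (inner ℝ f (F j) : ℝ) ^ 2 :=
          mul_le_mul_of_nonneg_left (hframe f).2.1 (by positivity)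
      _ = ∑ i, (m / B) * ∑' j : P i, (inner ℝ f (F j) : ℝ) ^ 2 := by
          rw [hsplit, Finset.mul_sum]
      _ ≤ ∑ i, v i ^ 2 * ‖q i‖ ^ 2 := by
          apply Finset.sum_le_sum
          intro i _
          calc (m / B) * ∑' j : P i, (inner ℝ f (F j) : ℝ) ^ 2
              ≤ (m / B) * (B * ‖q i‖ ^ 2) :=
                mul_le_mul_of_nonneg_left (hpiece i) (by positivity)
            _ = m * ‖q i‖ ^ 2 := by field_simp
            _ ≤ v i ^ 2 * ‖q i‖ ^ 2 :=
                mul_le_mul_of_nonneg_right (hinf_le i) (sq_nonneg _)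
      _ = ∑' i, v i ^ 2 * ‖q i‖ ^ 2 := (tsum_fintype _).symm
  · -- upper bound
    calc (∑' i, v i ^ 2 * ‖q i‖ ^ 2)
        = ∑ i, v i ^ 2 * ‖q i‖ ^ 2 := tsum_fintype _
      _ ≤ ∑ i : Fin n, (⨆ i, v i ^ 2) * ‖f‖ ^ 2 := by
          apply Finset.sum_le_sum
          intro i _
          have h1 : ‖q i‖ ^ 2 ≤ ‖f‖ ^ 2 :=
            pow_le_pow_left₀ (norm_nonneg _) (hqle i) 2
          calc v i ^ 2 * ‖q i‖ ^ 2 ≤ v i ^ 2 * ‖f‖ ^ 2 :=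
                mul_le_mul_of_nonneg_left h1 (sq_nonneg _)
            _ ≤ (⨆ i, v i ^ 2) * ‖f‖ ^ 2 :=
                mul_le_mul_of_nonneg_right (hsup_le i) (sq_nonneg _)
      _ = ((n : ℝ) * ⨆ i, v i ^ 2) * ‖f‖ ^ 2 := by
          rw [Finset.sum_const, Finset.card_univ, Fintype.card_fin]
          push_cast
          ring
end
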